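/- arXiv:1308.5349 — 2 statements merged into one kernel-verified Lean document; each statement's English description precedes it below -/
import Mathlib

section
/- Let w ∈ A₂ on ℝ. The operator Σ_{I∈D} ⟨w^{1/2}⟩_I ⟨w^{-1/2}⟩_{I₋} h_{I₋} ⊗ h_I (which equals P^{(0,0)}_{⟨w^{1/2}⟩} S P^{(0,0)}_{⟨w^{-1/2}⟩} for the Haar shift S h_I = h_{I₋}) has L² → L² operator norm equal to sup_{I∈D} ⟨w^{1/2}⟩_I ⟨w^{-1/2}⟩_{I₋}, and this is at most a constant times [w]_{A₂}^{1/2}. -/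
open MeasureTheory Set
open scoped ENNReal

noncomputable section

/-- The dyadic interval `[k·2^n, (k+1)·2^n)` encoded by the pair `p = (n, k)`. -/
def dyad (p : ℤ × ℤ) : Set ℝ := Set.Ico ((p.2 : ℝ) * 2 ^ p.1) (((p.2 : ℝ) + 1) * 2 ^ p.1)

/-- Left half of a dyadic interval. -/
def dLeft (p : ℤ × ℤ) : ℤ × ℤ := (p.1 - 1, 2 * p.2)

/-- Right half of a dyadic interval. -/
def dRight (p : ℤ × ℤ) : ℤ × ℤ := (p.1 - 1, 2 * p.2 + 1)

/-- Dyadic parent. -/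
def dParent (p : ℤ × ℤ) : ℤ × ℤ := (p.1 + 1, Int.fdiv p.2 2)

/-- Length of the dyadic interval. -/
def dLen (p : ℤ × ℤ) : ℝ := 2 ^ p.1

/-- The L²-normalized Haar function `h_I = |I|^{-1/2}(1_{I₋} - 1_{I₊})`. -/
def haarF (p : ℤ × ℤ) : ℝ → ℝ := fun x =>
  (Real.sqrt (dLen p))⁻¹ *
    ((dyad (dLeft p)).indicator (fun _ => (1 : ℝ)) x -
      (dyad (dRight p)).indicator (fun _ => (1 : ℝ)) x)

/-- The averaging function `h_I^1 = |I|^{-1} 1_I`. -/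
def haarAvg (p : ℤ × ℤ) : ℝ → ℝ := fun x =>
  (dLen p)⁻¹ * (dyad p).indicator (fun _ => (1 : ℝ)) x

/-- Haar coefficient `⟨f, h_I⟩`. -/
def hc (f : ℝ → ℝ) (p : ℤ × ℤ) : ℝ := ∫ x, f x * haarF p x

/-- Average `⟨f⟩_I = |I|⁻¹ ∫_I f`. -/
def avg (f : ℝ → ℝ) (p : ℤ × ℤ) : ℝ := (dLen p)⁻¹ * ∫ x in dyad p, f x

open Classical in
/-- `δ(J, I) = 1` if `J ⊆ I₋` and `-1` otherwise (in particular if `J ⊆ I₊`). -/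
def dsgn (q p : ℤ × ℤ) : ℝ := if dyad q ⊆ dyad (dLeft p) then 1 else -1

/-- `𝔰(J) = √2 · Σ_{K : K₋ ⊋ J} |K|⁻¹`. -/
def sfrak (p : ℤ × ℤ) : ℝ :=
  Real.sqrt 2 * ∑' q : {q : ℤ × ℤ // dyad p ⊂ dyad (dLeft q)}, (dLen q.1)⁻¹

lemma dLen_pos (p : ℤ × ℤ) : 0 < dLen p := zpow_pos (by norm_num) _

lemma two_zpow_sub_one (n : ℤ) : (2:ℝ) ^ (n - 1) * 2 = 2 ^ n := by
  rw [← zpow_add_one₀ (by norm_num : (2:ℝ) ≠ 0)]; ring_nf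

lemma dLeft_eq (p : ℤ × ℤ) :
    dyad (dLeft p) = Set.Ico ((p.2 : ℝ) * 2 ^ p.1)
      ((p.2 : ℝ) * 2 ^ p.1 + 2 ^ (p.1 - 1)) := by
  have h := two_zpow_sub_one p.1
  ext x
  simp only [dyad, dLeft, Set.mem_Ico]
  push_cast
  rw [← h]
  constructor <;> rintro ⟨h1, h2⟩ <;> constructor <;> linarith

lemma dRight_eq (p : ℤ × ℤ) :
    dyad (dRight p) = Set.Ico ((p.2 : ℝ) * 2 ^ p.1 + 2 ^ (p.1 - 1))
      (((p.2 : ℝ) + 1) * 2 ^ p.1) := by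
  have h := two_zpow_sub_one p.1
  ext x
  simp only [dyad, dRight, Set.mem_Ico]
  push_cast
  rw [← h]
  constructor <;> rintro ⟨h1, h2⟩ <;> constructor <;> linarith

lemma halves_disjoint (p : ℤ × ℤ) : Disjoint (dyad (dLeft p)) (dyad (dRight p)) := by
  rw [dLeft_eq, dRight_eq]; exact Set.Ico_disjoint_Ico_same

lemma halves_union (p : ℤ × ℤ) : dyad (dLeft p) ∪ dyad (dRight p) = dyad p := by
  rw [dLeft_eq, dRight_eq, dyad]
  have h := two_zpow_sub_one p.1
  have h2 : (0:ℝ) < 2 ^ (p.1 - 1) := zpow_pos (by norm_num) _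
  rw [← h]
  apply Set.Ico_union_Ico_eq_Ico
  · linarith
  · linarith

lemma dLeft_subset (p : ℤ × ℤ) : dyad (dLeft p) ⊆ dyad p := by
  rw [← halves_union p]; exact Set.subset_union_left

lemma dRight_subset (p : ℤ × ℤ) : dyad (dRight p) ⊆ dyad p := by
  rw [← halves_union p]; exact Set.subset_union_right

lemma measurableSet_dyad (p : ℤ × ℤ) : MeasurableSet (dyad p) := measurableSet_Ico

lemma volume_dyad (p : ℤ × ℤ) : volume (dyad p) = ENNReal.ofReal (dLen p) := by
  rw [dyad, Real.volume_Ico, dLen]; congr 1; ring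

lemma dyad_nonempty (p : ℤ × ℤ) : (dyad p).Nonempty := by
  refine ⟨(p.2 : ℝ) * 2 ^ p.1, le_refl _, ?_⟩
  have := dLen_pos p
  simp only [dLen] at this
  nlinarith

/-- Nesting: a dyadic interval of smaller or equal scale meeting another is contained in it. -/
lemma dyad_subset_of_inter {q p : ℤ × ℤ} (hle : q.1 ≤ p.1)
    (hne : (dyad q ∩ dyad p).Nonempty) : dyad q ⊆ dyad p := by
  obtain ⟨x, hxq, hxp⟩ := hne
  obtain ⟨m, j⟩ := q
  obtain ⟨n, k⟩ := p
  simp only [dyad] at hxq hxp ⊢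
  simp only at hle
  set d : ℕ := (n - m).toNat with hd
  have hdm : (2:ℝ) ^ n = 2 ^ m * (2:ℝ) ^ d := by
    rw [← zpow_natCast (2:ℝ) d, hd, Int.toNat_of_nonneg (by omega), ← zpow_add₀ (by norm_num)]
    ring_nf
  have h2m : (0:ℝ) < 2 ^ m := zpow_pos (by norm_num) _
  obtain ⟨hq1, hq2⟩ := hxq
  obtain ⟨hp1, hp2⟩ := hxp
  -- integer inequalities
  have hik : (k * 2 ^ d : ℤ) ≤ j := by
    have hr : (k:ℝ) * 2 ^ d * 2 ^ m < ((j:ℝ) + 1) * 2 ^ m := by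
      calc (k:ℝ) * 2 ^ d * 2 ^ m = (k:ℝ) * 2 ^ n := by rw [hdm]; ring
      _ ≤ x := hp1
      _ < ((j:ℝ) + 1) * 2 ^ m := hq2
    have := lt_of_mul_lt_mul_right hr h2m.le
    have : (↑(k * 2 ^ d) : ℝ) < ((j + 1 : ℤ) : ℝ) := by push_cast; linarith
    have := Int.cast_lt.mp this
    omega
  have hjk : (j + 1 : ℤ) ≤ (k + 1) * 2 ^ d := by
    have hr : (j:ℝ) * 2 ^ m < ((k:ℝ) + 1) * 2 ^ d * 2 ^ m := by
      calc (j:ℝ) * 2 ^ m ≤ x := hq1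
      _ < ((k:ℝ) + 1) * 2 ^ n := hp2
      _ = ((k:ℝ) + 1) * 2 ^ d * 2 ^ m := by rw [hdm]; ring
    have := lt_of_mul_lt_mul_right hr h2m.le
    have : ((j:ℤ) : ℝ) < (((k + 1) * 2 ^ d : ℤ) : ℝ) := by push_cast; linarith
    have := Int.cast_lt.mp this
    omega
  intro y hy
  obtain ⟨hy1, hy2⟩ := hy
  constructor
  · calc (k:ℝ) * 2 ^ n = (k:ℝ) * 2 ^ d * 2 ^ m := by rw [hdm]; ring
    _ ≤ (j:ℝ) * 2 ^ m := by
        have : ((k * 2 ^ d : ℤ) : ℝ) ≤ ((j:ℤ):ℝ) := Int.cast_le.mpr hik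
        push_cast at this
        nlinarith
    _ ≤ y := hy1
  · calc y < ((j:ℝ) + 1) * 2 ^ m := hy2
    _ ≤ ((k:ℝ) + 1) * 2 ^ d * 2 ^ m := by
        have : ((j + 1 : ℤ) : ℝ) ≤ (((k + 1) * 2 ^ d : ℤ) : ℝ) := Int.cast_le.mpr hjk
        push_cast at this
        nlinarith
    _ = ((k:ℝ) + 1) * 2 ^ n := by rw [hdm]; ring

lemma dyad_disjoint_same_scale {q p : ℤ × ℤ} (h1 : q.1 = p.1) (h2 : q ≠ p) :
    Disjoint (dyad q) (dyad p) := by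
  obtain ⟨m, j⟩ := q; obtain ⟨n, k⟩ := p
  simp only at h1; subst h1
  have hjk : j ≠ k := by simpa using h2
  have h2m : (0:ℝ) < 2 ^ m := zpow_pos (by norm_num) _
  rcases lt_or_gt_of_ne hjk with h | h
  · apply Set.Ico_disjoint_Ico.mpr
    simp only [dyad, min_def, max_def]
    have : ((j:ℝ) + 1) * 2 ^ m ≤ (k:ℝ) * 2 ^ m := by
      have : (j:ℝ) + 1 ≤ k := by exact_mod_cast h
      nlinarith
    split_ifs <;> linarith
  · apply Set.Ico_disjoint_Ico.mpr
    simp only [dyad, min_def, max_def]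
    have : ((k:ℝ) + 1) * 2 ^ m ≤ (j:ℝ) * 2 ^ m := by
      have : (k:ℝ) + 1 ≤ j := by exact_mod_cast h
      nlinarith
    split_ifs <;> linarith

lemma haar_zero_outside {p : ℤ × ℤ} {x : ℝ} (hx : x ∉ dyad p) : haarF p x = 0 := by
  have h1 : x ∉ dyad (dLeft p) := fun h => hx (dLeft_subset p h)
  have h2 : x ∉ dyad (dRight p) := fun h => hx (dRight_subset p h)
  simp [haarF, Set.indicator_of_notMem h1, Set.indicator_of_notMem h2]

lemma haar_on_left {p : ℤ × ℤ} {x : ℝ} (hx : x ∈ dyad (dLeft p)) :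
    haarF p x = (Real.sqrt (dLen p))⁻¹ := by
  have h2 : x ∉ dyad (dRight p) := fun h =>
    (halves_disjoint p).ne_of_mem hx h rfl
  simp [haarF, Set.indicator_of_mem hx, Set.indicator_of_notMem h2]

lemma haar_on_right {p : ℤ × ℤ} {x : ℝ} (hx : x ∈ dyad (dRight p)) :
    haarF p x = -(Real.sqrt (dLen p))⁻¹ := by
  have h1 : x ∉ dyad (dLeft p) := fun h =>
    (halves_disjoint p).ne_of_mem h hx rfl
  simp [haarF, Set.indicator_of_mem hx, Set.indicator_of_notMem h1]

lemma measurable_haarF (p : ℤ × ℤ) : Measurable (haarF p) := by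
  apply Measurable.const_mul
  exact ((measurable_const.indicator (measurableSet_dyad _)).sub
    (measurable_const.indicator (measurableSet_dyad _)))

lemma integrable_indicator_dyad (s : ℤ × ℤ) :
    Integrable ((dyad s).indicator fun _ => (1:ℝ)) volume := by
  rw [integrable_indicator_iff (measurableSet_dyad s)]
  exact integrableOn_const (by rw [volume_dyad]; exact ENNReal.ofReal_ne_top)

lemma integral_indicator_dyad (s : ℤ × ℤ) :
    ∫ x, (dyad s).indicator (fun _ => (1:ℝ)) x = dLen s := by
  rw [integral_indicator_const (1:ℝ) (measurableSet_dyad s), measureReal_def, volume_dyad,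
    ENNReal.toReal_ofReal (dLen_pos s).le, smul_eq_mul, mul_one]

lemma integrable_haarF (p : ℤ × ℤ) : Integrable (haarF p) volume := by
  exact (((integrable_indicator_dyad (dLeft p)).sub
    (integrable_indicator_dyad (dRight p))).const_mul _)

lemma memℒ2_haarF (p : ℤ × ℤ) : MemLp (haarF p) 2 volume := by
  have h : ∀ s : ℤ × ℤ, MemLp ((dyad s).indicator fun _ => (1:ℝ)) 2 volume := fun s =>
    memLp_indicator_const 2 (measurableSet_dyad s) 1
      (Or.inr (by rw [volume_dyad]; exact ENNReal.ofReal_ne_top))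
  exact ((h (dLeft p)).sub (h (dRight p))).const_mul _

lemma dLen_half (p : ℤ × ℤ) : dLen (dLeft p) * 2 = dLen p := two_zpow_sub_one p.1

lemma dLen_dRight (p : ℤ × ℤ) : dLen (dRight p) = dLen (dLeft p) := rfl

lemma integral_haarF (p : ℤ × ℤ) : ∫ x, haarF p x = 0 := by
  rw [show haarF p = fun x => (Real.sqrt (dLen p))⁻¹ *
    ((dyad (dLeft p)).indicator (fun _ => (1 : ℝ)) x -
      (dyad (dRight p)).indicator (fun _ => (1 : ℝ)) x) from rfl]
  rw [integral_const_mul, integral_sub (integrable_indicator_dyad _)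
    (integrable_indicator_dyad _), integral_indicator_dyad, integral_indicator_dyad,
    dLen_dRight, sub_self, mul_zero]

lemma haar_sq (p : ℤ × ℤ) (x : ℝ) :
    haarF p x * haarF p x = (dLen p)⁻¹ *
      ((dyad (dLeft p)).indicator (fun _ => (1:ℝ)) x +
        (dyad (dRight p)).indicator (fun _ => (1:ℝ)) x) := by
  have hc2 : (Real.sqrt (dLen p))⁻¹ * (Real.sqrt (dLen p))⁻¹ = (dLen p)⁻¹ := by
    rw [← mul_inv, Real.mul_self_sqrt (dLen_pos p).le]
  by_cases h1 : x ∈ dyad (dLeft p)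
  · have h2 : x ∉ dyad (dRight p) := fun h => (halves_disjoint p).ne_of_mem h1 h rfl
    simp only [haarF, Set.indicator_of_mem h1, Set.indicator_of_notMem h2]
    rw [← hc2]; ring
  · by_cases h2 : x ∈ dyad (dRight p)
    · simp only [haarF, Set.indicator_of_mem h2, Set.indicator_of_notMem h1]
      rw [← hc2]; ring
    · simp only [haarF, Set.indicator_of_notMem h1, Set.indicator_of_notMem h2]
      ring

lemma integral_haar_sq (p : ℤ × ℤ) : ∫ x, haarF p x * haarF p x = 1 := by
  have : (fun x => haarF p x * haarF p x) = fun x => (dLen p)⁻¹ *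
      ((dyad (dLeft p)).indicator (fun _ => (1:ℝ)) x +
        (dyad (dRight p)).indicator (fun _ => (1:ℝ)) x) := funext (haar_sq p)
  rw [this, integral_const_mul, integral_add (integrable_indicator_dyad _)
    (integrable_indicator_dyad _), integral_indicator_dyad, integral_indicator_dyad,
    dLen_dRight]
  have h := dLen_half p
  have := dLen_pos p
  field_simp
  linarith

lemma integral_haar_mul_const_on {q p : ℤ × ℤ} {c : ℝ}
    (h : ∀ x ∈ dyad q, haarF p x = c) : ∫ x, haarF q x * haarF p x = 0 := by
  have : (fun x => haarF q x * haarF p x) = fun x => haarF q x * c := by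
    funext x
    by_cases hx : x ∈ dyad q
    · rw [h x hx]
    · rw [haar_zero_outside hx, zero_mul, zero_mul]
  rw [this, integral_mul_const, integral_haarF, zero_mul]

lemma integral_haar_mul_disjoint {q p : ℤ × ℤ} (h : Disjoint (dyad q) (dyad p)) :
    ∫ x, haarF q x * haarF p x = 0 := by
  have : (fun x => haarF q x * haarF p x) = fun _ => (0:ℝ) := by
    funext x
    by_cases hx : x ∈ dyad q
    · rw [haar_zero_outside (fun hp => h.ne_of_mem hx hp rfl), mul_zero]
    · rw [haar_zero_outside hx, zero_mul]
  rw [this, integral_zero]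

lemma integral_haar_mul_of_lt {q p : ℤ × ℤ} (hlt : q.1 < p.1) :
    ∫ x, haarF q x * haarF p x = 0 := by
  by_cases hint : (dyad q ∩ dyad p).Nonempty
  · have hsub : dyad q ⊆ dyad p := dyad_subset_of_inter hlt.le hint
    obtain ⟨x, hx⟩ := dyad_nonempty q
    have hxp : x ∈ dyad p := hsub hx
    rw [← halves_union p] at hxp
    have hle : q.1 ≤ (dLeft p).1 := by simp only [dLeft]; omega
    rcases hxp with hxl | hxr
    · have : dyad q ⊆ dyad (dLeft p) := dyad_subset_of_inter hle ⟨x, hx, hxl⟩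
      exact integral_haar_mul_const_on (fun y hy => haar_on_left (this hy))
    · have : dyad q ⊆ dyad (dRight p) := dyad_subset_of_inter hle ⟨x, hx, hxr⟩
      exact integral_haar_mul_const_on (fun y hy => haar_on_right (this hy))
  · exact integral_haar_mul_disjoint
      (Set.disjoint_iff_inter_eq_empty.2 (Set.not_nonempty_iff_eq_empty.1 hint))

lemma integral_haar_mul {q p : ℤ × ℤ} (h : q ≠ p) :
    ∫ x, haarF q x * haarF p x = 0 := by
  rcases lt_trichotomy q.1 p.1 with hlt | heq | hgt
  · exact integral_haar_mul_of_lt hlt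
  · exact integral_haar_mul_disjoint (dyad_disjoint_same_scale heq h)
  · have : (fun x => haarF q x * haarF p x) = fun x => haarF p x * haarF q x := by
      funext x; ring
    rw [this]
    exact integral_haar_mul_of_lt hgt

lemma hc_haar (q p : ℤ × ℤ) : hc (haarF q) p = if q = p then 1 else 0 := by
  rw [hc]
  split_ifs with h
  · subst h; exact integral_haar_sq q
  · exact integral_haar_mul h

def haarLp (p : ℤ × ℤ) : Lp ℝ 2 (volume : Measure ℝ) := (memℒ2_haarF p).toLp (haarF p)

lemma inner_haarLp (i j : ℤ × ℤ) :
    inner ℝ (haarLp i) (haarLp j) = ∫ a, haarF i a * haarF j a := by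
  rw [MeasureTheory.L2.inner_def]
  apply integral_congr_ae
  filter_upwards [(memℒ2_haarF i).coeFn_toLp, (memℒ2_haarF j).coeFn_toLp] with a h1 h2
  rw [show ((haarLp i : Lp ℝ 2 (volume : Measure ℝ)) : ℝ → ℝ) a = haarF i a from h1,
    show ((haarLp j : Lp ℝ 2 (volume : Measure ℝ)) : ℝ → ℝ) a = haarF j a from h2]
  simp [RCLike.inner_apply, conj_trivial, mul_comm]

lemma orthonormal_haarLp : Orthonormal ℝ haarLp := by
  rw [orthonormal_iff_ite]
  intro i j
  rw [inner_haarLp]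
  split_ifs with h
  · subst h; exact integral_haar_sq i
  · exact integral_haar_mul h

lemma norm_haarLp (p : ℤ × ℤ) : ‖haarLp p‖ = 1 := orthonormal_haarLp.1 p

lemma eLpNorm_haarF (p : ℤ × ℤ) : eLpNorm (haarF p) 2 volume = 1 := by
  have h1 : eLpNorm (haarF p) 2 volume = eLpNorm (haarLp p : ℝ → ℝ) 2 volume :=
    (eLpNorm_congr_ae (memℒ2_haarF p).coeFn_toLp).symm
  have h2 : (eLpNorm (haarLp p : ℝ → ℝ) 2 volume).toReal = 1 := by
    rw [← MeasureTheory.Lp.norm_def]; exact norm_haarLp p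
  rw [h1, ← ENNReal.ofReal_toReal (MeasureTheory.Lp.eLpNorm_ne_top (haarLp p)), h2,
    ENNReal.ofReal_one]

lemma hc_eq_inner {f : ℝ → ℝ} (hf : MemLp f 2 volume) (p : ℤ × ℤ) :
    hc f p = inner ℝ (haarLp p) (hf.toLp f) := by
  rw [MeasureTheory.L2.inner_def, hc]
  apply integral_congr_ae
  filter_upwards [(memℒ2_haarF p).coeFn_toLp, hf.coeFn_toLp] with a h1 h2
  rw [show ((haarLp p : Lp ℝ 2 (volume : Measure ℝ)) : ℝ → ℝ) a = haarF p a from h1,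
    show ((hf.toLp f : Lp ℝ 2 (volume : Measure ℝ)) : ℝ → ℝ) a = f a from h2]
  simp [RCLike.inner_apply, conj_trivial, mul_comm]

lemma dLeft_injective : Function.Injective dLeft := by
  intro a b h
  simp only [dLeft, Prod.ext_iff] at h
  exact Prod.ext (by omega) (by omega)

lemma integrableOn_dyad {g : ℝ → ℝ} (hg : LocallyIntegrable g volume) (p : ℤ × ℤ) :
    IntegrableOn g (dyad p) volume :=
  (hg.integrableOn_isCompact isCompact_Icc).mono_set Set.Ico_subset_Icc_self

lemma avg_nonneg {g : ℝ → ℝ} (hg : ∀ x, 0 ≤ g x) (p : ℤ × ℤ) : 0 ≤ avg g p :=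
  mul_nonneg (inv_nonneg.2 (dLen_pos p).le)
    (setIntegral_nonneg (measurableSet_dyad p) (fun x _ => hg x))

lemma am_gm_sqrt (t : ℝ) (_ht : 0 ≤ t) : t ≤ (1 + t * t) / 2 := by nlinarith [sq_nonneg (t - 1)]

lemma integrable_const_dyad (p : ℤ × ℤ) (c : ℝ) :
    IntegrableOn (fun _ => c) (dyad p) volume :=
  integrableOn_const (by rw [volume_dyad]; exact ENNReal.ofReal_ne_top)

/-- Cauchy–Schwarz for averages: if `g ≥ 0` and `g·g = G`, then `⟨g⟩_I ≤ √⟨G⟩_I`. -/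
lemma avg_le_sqrt_avg {g G : ℝ → ℝ} (p : ℤ × ℤ) (hgn : ∀ x, 0 ≤ g x)
    (hG : ∀ x, g x * g x = G x) (hGi : IntegrableOn G (dyad p) volume)
    (hg : AEStronglyMeasurable g (volume.restrict (dyad p))) :
    avg g p ≤ Real.sqrt (avg G p) := by
  set μ := volume.restrict (dyad p) with hμ
  have hl := dLen_pos p
  have hGn : ∀ x, 0 ≤ G x := fun x => (hG x) ▸ mul_nonneg (hgn x) (hgn x)
  have hGi2 : Integrable (fun x => g x ^ 2) μ := by
    have h : (fun x => g x ^ 2) = G := by funext x; rw [← hG x]; ring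
    rw [h]; exact hGi
  have hmem : MemLp g 2 μ := (memLp_two_iff_integrable_sq hg).2 hGi2
  haveI : IsFiniteMeasure μ :=
    ⟨by rw [hμ, Measure.restrict_apply_univ, volume_dyad]; exact ENNReal.ofReal_lt_top⟩
  have hpq : Real.HolderConjugate 2 2 := by constructor <;> norm_num
  have hCS := MeasureTheory.integral_mul_le_Lp_mul_Lq_of_nonneg hpq
    (μ := μ) (f := g) (g := fun _ => (1:ℝ))
    (Filter.Eventually.of_forall hgn) (Filter.Eventually.of_forall (fun _ => zero_le_one))
    (by simpa using hmem) (by simpa using memLp_const (1:ℝ))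
  simp only [mul_one] at hCS
  have hint2 : ∫ a, g a ^ (2:ℝ) ∂μ = ∫ a, G a ∂μ := by
    apply integral_congr_ae
    filter_upwards with a
    rw [← hG a, show (2:ℝ) = ((2:ℕ):ℝ) by norm_num, Real.rpow_natCast]
    ring
  have hint1 : ∫ _a, (1:ℝ) ^ (2:ℝ) ∂μ = dLen p := by
    simp only [Real.one_rpow]
    rw [hμ, integral_const, smul_eq_mul, mul_one, measureReal_def, Measure.restrict_apply_univ, volume_dyad,
      ENNReal.toReal_ofReal hl.le]
  rw [hint2, hint1, ← Real.sqrt_eq_rpow, ← Real.sqrt_eq_rpow] at hCS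
  have hGint_nonneg : 0 ≤ ∫ a, G a ∂μ := integral_nonneg hGn
  have hgint_nonneg : 0 ≤ ∫ a, g a ∂μ := integral_nonneg hgn
  have hsq : (∫ a, g a ∂μ) ^ 2 ≤ (∫ a, G a ∂μ) * dLen p := by
    calc (∫ a, g a ∂μ) ^ 2 ≤ (Real.sqrt (∫ a, G a ∂μ) * Real.sqrt (dLen p)) ^ 2 :=
          pow_le_pow_left₀ hgint_nonneg hCS 2
      _ = (∫ a, G a ∂μ) * dLen p := by
          rw [mul_pow, Real.sq_sqrt hGint_nonneg, Real.sq_sqrt hl.le]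
  rw [avg, avg, Real.le_sqrt (mul_nonneg (inv_nonneg.2 hl.le) hgint_nonneg)
    (mul_nonneg (inv_nonneg.2 hl.le) hGint_nonneg)]
  rw [mul_pow]
  calc (dLen p)⁻¹ ^ 2 * (∫ a, g a ∂μ) ^ 2 ≤ (dLen p)⁻¹ ^ 2 * ((∫ a, G a ∂μ) * dLen p) :=
        mul_le_mul_of_nonneg_left hsq (by positivity)
    _ = (dLen p)⁻¹ * ∫ a, G a ∂μ := by field_simp

lemma avg_dLeft_le {g : ℝ → ℝ} {p : ℤ × ℤ} (hgn : ∀ x, 0 ≤ g x)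
    (hgi : IntegrableOn g (dyad p) volume) : avg g (dLeft p) ≤ 2 * avg g p := by
  have hl := dLen_pos p
  have hinv : (dLen (dLeft p))⁻¹ = 2 * (dLen p)⁻¹ := by
    have h := dLen_half p
    have hlL := dLen_pos (dLeft p)
    field_simp
    linarith
  have hmono : ∫ x in dyad (dLeft p), g x ≤ ∫ x in dyad p, g x :=
    setIntegral_mono_set hgi (Filter.Eventually.of_forall hgn)
      (Filter.Eventually.of_forall (dLeft_subset p))
  rw [avg, avg, hinv, mul_assoc]
  apply mul_le_mul_of_nonneg_left _ (by norm_num)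
  apply mul_le_mul_of_nonneg_left hmono (inv_nonneg.2 hl.le)

lemma eLpNorm_two_eq (f : ℝ → ℝ) :
    eLpNorm f 2 volume = (∫⁻ x, (‖f x‖₊ : ℝ≥0∞) ^ (2:ℕ)) ^ ((1:ℝ)/2) := by
  rw [eLpNorm_eq_lintegral_rpow_enorm_toReal (by norm_num) (by norm_num)]
  have h2 : ((2:ℝ≥0∞)).toReal = 2 := by norm_num
  rw [h2]
  congr 1
  apply lintegral_congr; intro x
  rw [show (2:ℝ) = ((2:ℕ):ℝ) by norm_num, ENNReal.rpow_natCast, enorm_eq_nnnorm]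

lemma rpow_half_pow_two (J : ℝ≥0∞) : (J ^ ((1:ℝ)/2)) ^ (2:ℕ) = J := by
  rw [← ENNReal.rpow_natCast, ← ENNReal.rpow_mul]; norm_num

lemma pow_two_rpow_half (J : ℝ≥0∞) : (J ^ (2:ℕ)) ^ ((1:ℝ)/2) = J := by
  rw [← ENNReal.rpow_natCast, ← ENNReal.rpow_mul]; norm_num


/-- The operator `Σ_I ⟨w^{1/2}⟩_I ⟨w^{-1/2}⟩_{I₋} h_{I₋} ⊗ h_I` has L²
operator norm exactly `sup_I ⟨w^{1/2}⟩_I ⟨w^{-1/2}⟩_{I₋}`, which is `≲ [w]_{A₂}^{1/2}`. -/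
theorem statement10 :
    ∃ C : ℝ, 0 < C ∧ ∀ (w : ℝ → ℝ), (∀ x, 0 < w x) →
      LocallyIntegrable w volume → LocallyIntegrable (fun x => (w x)⁻¹) volume →
      ∀ A : ℝ, 0 ≤ A → (∀ p : ℤ × ℤ, avg w p * avg (fun x => (w x)⁻¹) p ≤ A) →
        IsLeast
          {C' : ℝ | 0 ≤ C' ∧ ∀ f : ℝ → ℝ, MemLp f 2 volume →
            eLpNorm (fun x => ∑' p : ℤ × ℤ, avg (fun y => Real.sqrt (w y)) p *
                avg (fun y => (Real.sqrt (w y))⁻¹) (dLeft p) * hc f p * haarF (dLeft p) x)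
              2 volume ≤ ENNReal.ofReal C' * eLpNorm f 2 volume}
          (⨆ p : ℤ × ℤ, avg (fun y => Real.sqrt (w y)) p *
            avg (fun y => (Real.sqrt (w y))⁻¹) (dLeft p)) ∧
        (⨆ p : ℤ × ℤ, avg (fun y => Real.sqrt (w y)) p *
            avg (fun y => (Real.sqrt (w y))⁻¹) (dLeft p)) ≤ C * Real.sqrt A := by
  refine ⟨2, by norm_num, ?_⟩
  intro w hw hw1 hw2 A hA hA2
  set g : ℝ → ℝ := fun y => Real.sqrt (w y) with hg
  set gi : ℝ → ℝ := fun y => (Real.sqrt (w y))⁻¹ with hgi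
  set a : ℤ × ℤ → ℝ := fun p => avg g p * avg gi (dLeft p) with ha
  -- basic positivity of g, gi
  have hgn : ∀ x, 0 ≤ g x := fun x => Real.sqrt_nonneg _
  have hgin : ∀ x, 0 ≤ gi x := fun x => inv_nonneg.2 (Real.sqrt_nonneg _)
  have hgg : ∀ x, g x * g x = w x := fun x => Real.mul_self_sqrt (hw x).le
  have hgigi : ∀ x, gi x * gi x = (w x)⁻¹ := fun x => by
    rw [hgi]; rw [← mul_inv, Real.mul_self_sqrt (hw x).le]
  -- measurability
  have hwm : AEStronglyMeasurable w volume := hw1.aestronglyMeasurable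
  have hgm : AEStronglyMeasurable g volume :=
    Real.continuous_sqrt.comp_aestronglyMeasurable hwm
  have hgim : AEStronglyMeasurable gi volume := (hgm.aemeasurable.inv).aestronglyMeasurable
  -- integrability on dyadic intervals
  have hwi : ∀ p, IntegrableOn w (dyad p) volume := integrableOn_dyad hw1
  have hwii : ∀ p, IntegrableOn (fun x => (w x)⁻¹) (dyad p) volume := integrableOn_dyad hw2
  have hgint : ∀ p, IntegrableOn g (dyad p) volume := by
    intro p
    apply Integrable.mono' (g := fun x => (1 + w x) / 2)
      (((integrable_const_dyad p 1).add (hwi p)).div_const 2)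
      (hgm.restrict)
    filter_upwards with x
    rw [Real.norm_eq_abs, abs_of_nonneg (hgn x), ← hgg x]
    exact am_gm_sqrt _ (hgn x)
  have hgiint : ∀ p, IntegrableOn gi (dyad p) volume := by
    intro p
    apply Integrable.mono' (g := fun x => (1 + (w x)⁻¹) / 2)
      (((integrable_const_dyad p 1).add (hwii p)).div_const 2)
      (hgim.restrict)
    filter_upwards with x
    rw [Real.norm_eq_abs, abs_of_nonneg (hgin x), ← hgigi x]
    exact am_gm_sqrt _ (hgin x)
  -- the key bound a p ≤ 2 √A
  have hbound : ∀ p, a p ≤ 2 * Real.sqrt A := by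
    intro p
    have h1 : avg g p ≤ Real.sqrt (avg w p) :=
      avg_le_sqrt_avg p hgn hgg (hwi p) hgm.restrict
    have h2 : avg gi (dLeft p) ≤ 2 * Real.sqrt (avg (fun x => (w x)⁻¹) p) := by
      calc avg gi (dLeft p) ≤ 2 * avg gi p := avg_dLeft_le hgin (hgiint p)
        _ ≤ 2 * Real.sqrt (avg (fun x => (w x)⁻¹) p) := by
            have := avg_le_sqrt_avg p hgin hgigi (hwii p) hgim.restrict
            linarith
    calc a p ≤ Real.sqrt (avg w p) * (2 * Real.sqrt (avg (fun x => (w x)⁻¹) p)) :=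
          mul_le_mul h1 h2 (avg_nonneg hgin _) (Real.sqrt_nonneg _)
      _ = 2 * (Real.sqrt (avg w p) * Real.sqrt (avg (fun x => (w x)⁻¹) p)) := by ring
      _ = 2 * Real.sqrt (avg w p * avg (fun x => (w x)⁻¹) p) := by
          rw [Real.sqrt_mul (avg_nonneg (fun x => (hw x).le) p)]
      _ ≤ 2 * Real.sqrt A := by
          have := Real.sqrt_le_sqrt (hA2 p)
          linarith
  have hanon : ∀ p, 0 ≤ a p := fun p => mul_nonneg (avg_nonneg hgn _) (avg_nonneg hgin _)
  have hbdd : BddAbove (Set.range a) := ⟨2 * Real.sqrt A, by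
    rintro _ ⟨p, rfl⟩; exact hbound p⟩
  set M : ℝ := ⨆ p : ℤ × ℤ, a p with hM
  have haM : ∀ p, a p ≤ M := fun p => le_ciSup hbdd p
  have hM0 : 0 ≤ M := le_trans (hanon (0,0)) (haM (0,0))
  have hMle : M ≤ 2 * Real.sqrt A := ciSup_le hbound
  refine ⟨⟨⟨hM0, ?_⟩, ?_⟩, hMle⟩
  · -- membership: the operator is bounded by M
    intro f hf
    set f' : Lp ℝ 2 (volume : Measure ℝ) := hf.toLp f with hf'
    set c : ℤ × ℤ → ℝ := fun p => hc f p with hcdef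
    have hcc : ∀ p, c p = inner ℝ (haarLp p) f' := fun p => hc_eq_inner hf p
    set e : ℕ ≃ ℤ × ℤ := (Denumerable.eqv (ℤ × ℤ)).symm with he
    set term : ℤ × ℤ → ℝ → ℝ := fun p x => a p * c p * haarF (dLeft p) x with hterm
    set T : ℝ → ℝ := fun x => ∑' p, term p x with hT
    set S : ℕ → ℝ → ℝ := fun n x => ∑ i ∈ Finset.range n, term (e i) x with hS
    set Φ : ℕ → Lp ℝ 2 (volume : Measure ℝ) :=
      fun n => ∑ i ∈ Finset.range n, (a (e i) * c (e i)) • haarLp (dLeft (e i)) with hΦ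
    show eLpNorm T 2 volume ≤ ENNReal.ofReal M * eLpNorm f 2 volume
    -- a.e. identification of Φ n with S n
    have hΦS : ∀ n, (Φ n : ℝ → ℝ) =ᵐ[volume] S n := by
      intro n
      induction n with
      | zero =>
          simp only [hΦ, Finset.range_zero, Finset.sum_empty, hS]
          filter_upwards [MeasureTheory.Lp.coeFn_zero ℝ 2 (volume : Measure ℝ)] with x hx
          simpa using hx
      | succ n ih =>
          have hadd : Φ (n+1) = Φ n + (a (e n) * c (e n)) • haarLp (dLeft (e n)) := by
            simp only [hΦ, Finset.sum_range_succ]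
          rw [hadd]
          filter_upwards [MeasureTheory.Lp.coeFn_add (Φ n)
              ((a (e n) * c (e n)) • haarLp (dLeft (e n))),
            MeasureTheory.Lp.coeFn_smul (a (e n) * c (e n)) (haarLp (dLeft (e n))),
            (memℒ2_haarF (dLeft (e n))).coeFn_toLp, ih] with x h1 h2 h3 h4
          simp only [hS, Finset.sum_range_succ]
          rw [h1]
          simp only [Pi.add_apply]
          rw [h4, h2]
          simp only [Pi.smul_apply, smul_eq_mul]
          rw [show ((haarLp (dLeft (e n)) : Lp ℝ 2 (volume : Measure ℝ)) : ℝ → ℝ) x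
            = haarF (dLeft (e n)) x from h3]
    -- norm computation for Φ n
    have hnorm : ∀ n, ‖Φ n‖ ≤ M * ‖f'‖ := by
      intro n
      have hON : Orthonormal ℝ (fun i : ℕ => haarLp (dLeft (e i))) :=
        orthonormal_haarLp.comp _ (dLeft_injective.comp e.injective)
      have hsq : ‖Φ n‖ ^ 2 = ∑ i ∈ Finset.range n, (a (e i) * c (e i)) ^ 2 := by
        rw [← real_inner_self_eq_norm_sq]
        simp only [hΦ]
        rw [sum_inner]
        refine Finset.sum_congr rfl (fun i hi => ?_)
        rw [real_inner_smul_left,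
          hON.inner_right_sum (fun i => a (e i) * c (e i)) hi]
        ring
      have hbes : ∑ i ∈ Finset.range n, (c (e i)) ^ 2 ≤ ‖f'‖ ^ 2 := by
        have hON2 : Orthonormal ℝ (fun i : ℕ => haarLp (e i)) :=
          orthonormal_haarLp.comp _ e.injective
        have := hON2.sum_inner_products_le (s := Finset.range n) f'
        calc ∑ i ∈ Finset.range n, (c (e i)) ^ 2
            = ∑ i ∈ Finset.range n, ‖inner ℝ (haarLp (e i)) f'‖ ^ 2 := by
              refine Finset.sum_congr rfl (fun i _ => ?_)
              rw [hcc, Real.norm_eq_abs, sq_abs]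
          _ ≤ ‖f'‖ ^ 2 := this
      have h2 : ‖Φ n‖ ^ 2 ≤ (M * ‖f'‖) ^ 2 := by
        rw [hsq]
        calc ∑ i ∈ Finset.range n, (a (e i) * c (e i)) ^ 2
            ≤ ∑ i ∈ Finset.range n, M ^ 2 * (c (e i)) ^ 2 := by
              refine Finset.sum_le_sum (fun i _ => ?_)
              rw [mul_pow]
              exact mul_le_mul_of_nonneg_right
                (pow_le_pow_left₀ (hanon _) (haM _) 2) (sq_nonneg _)
          _ = M ^ 2 * ∑ i ∈ Finset.range n, (c (e i)) ^ 2 := by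
              rw [Finset.mul_sum]
          _ ≤ M ^ 2 * ‖f'‖ ^ 2 := by
              exact mul_le_mul_of_nonneg_left hbes (sq_nonneg _)
          _ = (M * ‖f'‖) ^ 2 := by ring
      calc ‖Φ n‖ = Real.sqrt (‖Φ n‖ ^ 2) := (Real.sqrt_sq (norm_nonneg _)).symm
        _ ≤ Real.sqrt ((M * ‖f'‖) ^ 2) := Real.sqrt_le_sqrt h2
        _ = M * ‖f'‖ := Real.sqrt_sq (mul_nonneg hM0 (norm_nonneg _))
    -- eLpNorm of partial sums
    have heS : ∀ n, eLpNorm (S n) 2 volume = ENNReal.ofReal ‖Φ n‖ := by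
      intro n
      rw [← eLpNorm_congr_ae (hΦS n), MeasureTheory.Lp.norm_def,
        ENNReal.ofReal_toReal (MeasureTheory.Lp.eLpNorm_ne_top (Φ n))]
    -- pointwise liminf bound
    have hmeasS : ∀ n, Measurable (S n) := by
      intro n
      apply Finset.measurable_sum
      intro i _
      exact (measurable_haarF (dLeft (e i))).const_mul _
    have hpt : ∀ x, (‖T x‖₊ : ℝ≥0∞) ^ (2:ℕ) ≤
        Filter.liminf (fun n => (‖S n x‖₊ : ℝ≥0∞) ^ (2:ℕ)) Filter.atTop := by
      intro x
      by_cases hsum : Summable (fun p => term p x)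
      · have hsum2 : Summable ((fun p => term p x) ∘ e) := e.summable_iff.2 hsum
        have htend : Filter.Tendsto (fun n => S n x) Filter.atTop (nhds (T x)) := by
          have h1 := hsum2.hasSum.tendsto_sum_nat
          have h2 : ∑' (b : ℕ), ((fun p => term p x) ∘ e) b = T x := by
            rw [Function.comp_def, e.tsum_eq (fun p => term p x)]
          rw [h2] at h1
          exact h1
        have htend2 : Filter.Tendsto (fun n => (‖S n x‖₊ : ℝ≥0∞) ^ (2:ℕ))
            Filter.atTop (nhds ((‖T x‖₊ : ℝ≥0∞) ^ (2:ℕ))) :=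
          ((ENNReal.continuous_pow 2).tendsto _).comp (ENNReal.tendsto_coe.2 htend.nnnorm)
        exact htend2.liminf_eq.ge
      · have hz : T x = 0 := tsum_eq_zero_of_not_summable hsum
        simp [hz]
    -- put together
    have hofreal : ENNReal.ofReal ‖f'‖ = eLpNorm f 2 volume := by
      rw [MeasureTheory.Lp.norm_def, eLpNorm_congr_ae hf.coeFn_toLp,
        ENNReal.ofReal_toReal hf.eLpNorm_ne_top]
    have key : ∫⁻ x, (‖T x‖₊ : ℝ≥0∞) ^ (2:ℕ) ≤ (ENNReal.ofReal (M * ‖f'‖)) ^ (2:ℕ) := by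
      calc ∫⁻ x, (‖T x‖₊ : ℝ≥0∞) ^ (2:ℕ)
          ≤ ∫⁻ x, Filter.liminf (fun n => (‖S n x‖₊ : ℝ≥0∞) ^ (2:ℕ)) Filter.atTop :=
            lintegral_mono hpt
        _ ≤ Filter.liminf (fun n => ∫⁻ x, (‖S n x‖₊ : ℝ≥0∞) ^ (2:ℕ)) Filter.atTop :=
            lintegral_liminf_le
              (fun n => ((hmeasS n).nnnorm.coe_nnreal_ennreal).pow_const 2)
        _ ≤ (ENNReal.ofReal (M * ‖f'‖)) ^ (2:ℕ) := by
            have hn : ∀ n, ∫⁻ x, (‖S n x‖₊ : ℝ≥0∞) ^ (2:ℕ)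
                ≤ (ENNReal.ofReal (M * ‖f'‖)) ^ (2:ℕ) := by
              intro n
              have h1 : ∫⁻ x, (‖S n x‖₊ : ℝ≥0∞) ^ (2:ℕ) = (eLpNorm (S n) 2 volume) ^ (2:ℕ) := by
                rw [eLpNorm_two_eq, rpow_half_pow_two]
              rw [h1, heS n]
              exact pow_le_pow_left' (ENNReal.ofReal_le_ofReal (hnorm n)) 2
            calc Filter.liminf (fun n => ∫⁻ x, (‖S n x‖₊ : ℝ≥0∞) ^ (2:ℕ)) Filter.atTop
                ≤ Filter.liminf (fun _ => (ENNReal.ofReal (M * ‖f'‖)) ^ (2:ℕ)) Filter.atTop :=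
                  Filter.liminf_le_liminf (Filter.Eventually.of_forall hn)
              _ = (ENNReal.ofReal (M * ‖f'‖)) ^ (2:ℕ) := Filter.liminf_const _
    calc eLpNorm T 2 volume = (∫⁻ x, (‖T x‖₊ : ℝ≥0∞) ^ (2:ℕ)) ^ ((1:ℝ)/2) := eLpNorm_two_eq T
      _ ≤ ((ENNReal.ofReal (M * ‖f'‖)) ^ (2:ℕ)) ^ ((1:ℝ)/2) :=
          ENNReal.rpow_le_rpow key (by norm_num)
      _ = ENNReal.ofReal (M * ‖f'‖) := pow_two_rpow_half _
      _ = ENNReal.ofReal M * eLpNorm f 2 volume := by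
          rw [ENNReal.ofReal_mul hM0, hofreal]
  · -- lower bound: M is the least such constant
    rintro C' ⟨hC0, hC⟩
    apply ciSup_le
    intro p
    have hCp := hC (haarF p) (memℒ2_haarF p)
    have hfun : (fun x => ∑' q : ℤ × ℤ, avg g q * avg gi (dLeft q) * hc (haarF p) q *
        haarF (dLeft q) x) = fun x => a p * haarF (dLeft p) x := by
      funext x
      rw [tsum_eq_single p]
      · rw [hc_haar p p]; simp [ha]
      · intro q hq
        rw [hc_haar p q, if_neg (fun h => hq h.symm)]
        ring
    rw [hfun] at hCp
    have h1 : eLpNorm (fun x => a p * haarF (dLeft p) x) 2 volume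
        = ENNReal.ofReal (a p) := by
      have : eLpNorm (fun x => a p * haarF (dLeft p) x) 2 volume
          = ‖a p‖ₑ * eLpNorm (haarF (dLeft p)) 2 volume := by
        exact eLpNorm_const_smul (μ := (volume : Measure ℝ))
          (p := (2:ℝ≥0∞)) (a p) (haarF (dLeft p))
      rw [this, eLpNorm_haarF, mul_one, Real.enorm_eq_ofReal (hanon p)]
    rw [h1, eLpNorm_haarF, mul_one] at hCp
    exact (ENNReal.ofReal_le_ofReal_iff hC0).1 hCp
end
end

section
/- Let w ∈ A₂ on ℝ. Then for every dyadic interval L: Σ_{K⊆L} (⟨w^{-1/2},h_K⟩)² ⟨w⟩_K² ≲ [w]²_{A₂} w(L) = [w]²_{A₂} ∫_L w. -/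
open MeasureTheory Set
open scoped ENNReal

noncomputable section

namespace S12

def lep (p : ℤ×ℤ) : ℝ := (p.2:ℝ) * 2 ^ p.1
def rep (p : ℤ×ℤ) : ℝ := lep p + 2 ^ p.1

lemma dyad_eq (p : ℤ×ℤ) : dyad p = Ico (lep p) (rep p) := by
  simp only [dyad, lep, rep]; congr 1; ring

lemma dLen_pos (p : ℤ×ℤ) : (0:ℝ) < dLen p := by unfold dLen; positivity

lemma lep_lt_rep (p : ℤ×ℤ) : lep p < rep p := by
  have := dLen_pos p; unfold dLen at this; unfold rep; linarith

lemma dyad_nonempty (p : ℤ×ℤ) : (dyad p).Nonempty := by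
  rw [dyad_eq]; exact ⟨lep p, le_refl _, lep_lt_rep p⟩

lemma half_pow (n : ℤ) : (2:ℝ)^(n-1) = 2^n / 2 := by
  rw [zpow_sub_one₀ (two_ne_zero)]; ring

lemma dLeft_eq (p : ℤ×ℤ) : dyad (dLeft p) = Ico (lep p) (lep p + 2^p.1/2) := by
  rw [dyad_eq]; simp only [lep, rep, dLeft, half_pow]; push_cast; congr 1 <;> ring

lemma dRight_eq (p : ℤ×ℤ) : dyad (dRight p) = Ico (lep p + 2^p.1/2) (rep p) := by
  rw [dyad_eq]; simp only [lep, rep, dRight, half_pow]; push_cast; congr 1 <;> ring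

lemma halves_union (p : ℤ×ℤ) : dyad (dLeft p) ∪ dyad (dRight p) = dyad p := by
  rw [dLeft_eq, dRight_eq, dyad_eq]
  apply Ico_union_Ico_eq_Ico
  · have := dLen_pos p; unfold dLen at this; linarith
  · have := dLen_pos p; unfold dLen at this; unfold rep; linarith

lemma halves_disjoint (p : ℤ×ℤ) : Disjoint (dyad (dLeft p)) (dyad (dRight p)) := by
  rw [dLeft_eq, dRight_eq]
  exact Ico_disjoint_Ico_same

lemma subset_of_int (p q : ℤ×ℤ) (h : q.1 ≤ p.1)
    (h1 : p.2 * 2^(p.1 - q.1).toNat ≤ q.2) (h2 : q.2 + 1 ≤ (p.2+1) * 2^(p.1 - q.1).toNat) :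
    dyad q ⊆ dyad p := by
  rw [dyad_eq, dyad_eq]
  have hd : ((p.1 - q.1).toNat : ℤ) = p.1 - q.1 := Int.toNat_of_nonneg (by omega)
  have hpow : (2:ℝ)^p.1 = (2:ℝ)^(p.1 - q.1).toNat * 2^q.1 := by
    rw [← zpow_natCast (2:ℝ), hd, ← zpow_add₀ (two_ne_zero)]; ring_nf
  have hq2 : (0:ℝ) < 2^q.1 := by positivity
  apply Ico_subset_Ico
  · unfold lep
    rw [hpow]
    have : ((p.2 * 2^(p.1 - q.1).toNat : ℤ) : ℝ) ≤ ((q.2:ℤ):ℝ) := by exact_mod_cast h1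
    push_cast at this ⊢
    nlinarith
  · unfold rep lep
    rw [hpow]
    have : ((q.2 + 1 : ℤ) : ℝ) ≤ (((p.2+1) * 2^(p.1 - q.1).toNat : ℤ) : ℝ) := by exact_mod_cast h2
    push_cast at this ⊢
    nlinarith

lemma dyad_trichotomy (p q : ℤ×ℤ) (h : q.1 ≤ p.1) :
    dyad q ⊆ dyad p ∨ Disjoint (dyad q) (dyad p) := by
  set t : ℤ := 2^(p.1 - q.1).toNat with ht
  have hd : ((p.1 - q.1).toNat : ℤ) = p.1 - q.1 := Int.toNat_of_nonneg (by omega)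
  have hpow : (2:ℝ)^p.1 = (t:ℝ) * 2^q.1 := by
    rw [ht]; push_cast
    rw [← zpow_natCast (2:ℝ), hd, ← zpow_add₀ (two_ne_zero)]; ring_nf
  have hq2 : (0:ℝ) < 2^q.1 := by positivity
  rcases le_or_gt (p.2 * t) q.2 with h1 | h1
  · rcases le_or_gt (q.2 + 1) ((p.2+1) * t) with h2 | h2
    · exact Or.inl (subset_of_int p q h h1 h2)
    · -- q.2 + 1 > (p.2+1)*t, so q.2 ≥ (p.2+1)*t : dyad q to the right of dyad p
      right
      rw [dyad_eq, dyad_eq, Set.disjoint_left]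
      intro x hx hx'
      have hxq : lep q ≤ x := hx.1
      have hxp : x < rep p := hx'.2
      have : rep p ≤ lep q := by
        unfold rep lep
        rw [hpow]
        have : ((p.2+1) * t : ℤ) ≤ q.2 := by omega
        have : (((p.2+1) * t : ℤ):ℝ) ≤ (q.2:ℝ) := by exact_mod_cast this
        push_cast at this ⊢
        nlinarith
      linarith
  · -- q.2 < p.2 * t : dyad q to the left
    right
    rw [dyad_eq, dyad_eq, Set.disjoint_left]
    intro x hx hx'
    have hxq : x < rep q := hx.2
    have hxp : lep p ≤ x := hx'.1
    have : rep q ≤ lep p := by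
      unfold rep lep
      rw [hpow]
      have : (q.2+1 : ℤ) ≤ p.2 * t := by omega
      have : ((q.2+1 : ℤ):ℝ) ≤ ((p.2 * t : ℤ):ℝ) := by exact_mod_cast this
      push_cast at this ⊢
      nlinarith
    linarith

end S12

namespace S12

lemma subset_endpoints {p q : ℤ×ℤ} (h : dyad q ⊆ dyad p) : lep p ≤ lep q ∧ rep q ≤ rep p := by
  have h1 : lep q ∈ dyad p := h (by rw [dyad_eq]; exact ⟨le_refl _, lep_lt_rep q⟩)
  rw [dyad_eq] at h1
  constructor
  · exact h1.1
  · by_contra hcon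
    push_neg at hcon
    have hx : max (lep q) (rep p) ∈ dyad q := by
      rw [dyad_eq]
      exact ⟨le_max_left _ _, max_lt (lep_lt_rep q) hcon⟩
    have := h hx
    rw [dyad_eq] at this
    have := this.2
    have : rep p ≤ max (lep q) (rep p) := le_max_right _ _
    linarith [(h hx).2, ((dyad_eq p) ▸ h hx).2]

lemma len_le_of_subset {p q : ℤ×ℤ} (h : dyad q ⊆ dyad p) : (2:ℝ)^q.1 ≤ 2^p.1 := by
  obtain ⟨h1, h2⟩ := subset_endpoints h
  unfold rep at h2
  linarith

lemma scale_le_of_subset {p q : ℤ×ℤ} (h : dyad q ⊆ dyad p) : q.1 ≤ p.1 := by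
  have := len_le_of_subset h
  exact (zpow_le_zpow_iff_right₀ (by norm_num : (1:ℝ) < 2)).1 this

lemma eq_of_subset_scale {p q : ℤ×ℤ} (h : dyad q ⊆ dyad p) (hs : q.1 = p.1) : q = p := by
  obtain ⟨h1, h2⟩ := subset_endpoints h
  unfold rep at h2
  rw [hs] at h2
  have h3 : lep q ≤ lep p := by linarith
  have h4 : lep q = lep p := le_antisymm h3 h1
  unfold lep at h4
  rw [hs] at h4
  have hpow : (0:ℝ) < 2^p.1 := by positivity
  have : (q.2:ℝ) = p.2 := by
    exact mul_right_cancel₀ hpow.ne' h4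
  have : q.2 = p.2 := by exact_mod_cast this
  exact Prod.ext hs this

lemma dyad_inj {p q : ℤ×ℤ} (h : dyad q = dyad p) : q = p := by
  have h1 : dyad q ⊆ dyad p := h.le
  have h2 : dyad p ⊆ dyad q := h.ge
  exact eq_of_subset_scale h1 (le_antisymm (scale_le_of_subset h1) (scale_le_of_subset h2))

lemma scale_lt_of_ssubset {p q : ℤ×ℤ} (h : dyad q ⊆ dyad p) (hne : q ≠ p) : q.1 < p.1 := by
  rcases lt_or_eq_of_le (scale_le_of_subset h) with h' | h'
  · exact h'
  · exact absurd (eq_of_subset_scale h h') hne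

lemma subset_halves {p q : ℤ×ℤ} (h : dyad q ⊆ dyad p) (hs : q.1 < p.1) :
    dyad q ⊆ dyad (dLeft p) ∨ dyad q ⊆ dyad (dRight p) := by
  have hsl : q.1 ≤ (dLeft p).1 := by simp [dLeft]; omega
  rcases dyad_trichotomy (dLeft p) q hsl with hsub | hdis
  · exact Or.inl hsub
  · right
    intro x hx
    have hxp := h hx
    rw [← halves_union p] at hxp
    rcases hxp with hxl | hxr
    · exact absurd hxl (Set.disjoint_left.1 hdis hx)
    · exact hxr

lemma self_eq_half_parent (p : ℤ×ℤ) : p = dLeft (dParent p) ∨ p = dRight (dParent p) := by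
  have hfd : Int.fdiv p.2 2 = p.2 / 2 := Int.fdiv_eq_ediv_of_nonneg _ (by norm_num)
  have hmod := Int.emod_two_eq_zero_or_one p.2
  have hdm := Int.mul_ediv_add_emod p.2 2
  rcases hmod with h | h
  · left
    simp only [dLeft, dParent, hfd]
    refine Prod.ext (by simp) ?_
    simp only []
    omega
  · right
    simp only [dRight, dParent, hfd]
    refine Prod.ext (by simp) ?_
    simp only []
    omega

lemma subset_parent (p : ℤ×ℤ) : dyad p ⊆ dyad (dParent p) := by
  rcases self_eq_half_parent p with h | h
  · conv_lhs => rw [h]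
    rw [← halves_union (dParent p)]
    exact Set.subset_union_left
  · conv_lhs => rw [h]
    rw [← halves_union (dParent p)]
    exact Set.subset_union_right

lemma parent_scale (p : ℤ×ℤ) : (dParent p).1 = p.1 + 1 := rfl

lemma parent_subset_of_ssubset {p q : ℤ×ℤ} (h : dyad q ⊆ dyad p) (hne : q ≠ p) :
    dyad (dParent q) ⊆ dyad p := by
  have hs : (dParent q).1 ≤ p.1 := by
    rw [parent_scale]; have := scale_lt_of_ssubset h hne; omega
  rcases dyad_trichotomy p (dParent q) hs with hsub | hdis
  · exact hsub
  · exfalso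
    obtain ⟨x, hx⟩ := dyad_nonempty q
    exact Set.disjoint_left.1 hdis (subset_parent q hx) (h hx)

end S12

namespace S12

lemma measurableSet_dyad (p : ℤ×ℤ) : MeasurableSet (dyad p) := by
  rw [dyad_eq]; exact measurableSet_Ico

lemma volume_dyad (p : ℤ×ℤ) : volume (dyad p) = ENNReal.ofReal (dLen p) := by
  rw [dyad_eq, Real.volume_Ico]
  congr 1
  unfold rep dLen
  ring

lemma volume_dyad_lt_top (p : ℤ×ℤ) : volume (dyad p) < ⊤ := by
  rw [volume_dyad]; exact ENNReal.ofReal_lt_top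

lemma volume_dyad_toReal (p : ℤ×ℤ) : (volume (dyad p)).toReal = dLen p := by
  rw [volume_dyad, ENNReal.toReal_ofReal (dLen_pos p).le]

lemma haarF_eq_zero {p : ℤ×ℤ} {x : ℝ} (hx : x ∉ dyad p) : haarF p x = 0 := by
  unfold haarF
  rw [Set.indicator_of_notMem, Set.indicator_of_notMem]
  · ring
  · exact fun hh => hx ((halves_union p) ▸ Set.mem_union_right _ hh)
  · exact fun hh => hx ((halves_union p) ▸ Set.mem_union_left _ hh)

lemma haarF_left {p : ℤ×ℤ} {x : ℝ} (hx : x ∈ dyad (dLeft p)) :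
    haarF p x = (Real.sqrt (dLen p))⁻¹ := by
  unfold haarF
  rw [Set.indicator_of_mem hx, Set.indicator_of_notMem]
  · ring
  · exact fun hh => (Set.disjoint_left.1 (halves_disjoint p)) hx hh

lemma haarF_right {p : ℤ×ℤ} {x : ℝ} (hx : x ∈ dyad (dRight p)) :
    haarF p x = -(Real.sqrt (dLen p))⁻¹ := by
  unfold haarF
  rw [Set.indicator_of_mem hx, Set.indicator_of_notMem]
  · ring
  · exact fun hh => (Set.disjoint_left.1 (halves_disjoint p)) hh hx

lemma haarF_abs_le (p : ℤ×ℤ) (x : ℝ) : |haarF p x| ≤ (Real.sqrt (dLen p))⁻¹ := by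
  have h0 : (0:ℝ) ≤ (Real.sqrt (dLen p))⁻¹ := by positivity
  by_cases hx : x ∈ dyad p
  · rw [← halves_union p] at hx
    rcases hx with h | h
    · rw [haarF_left h, abs_of_nonneg h0]
    · rw [haarF_right h, abs_neg, abs_of_nonneg h0]
  · rw [haarF_eq_zero hx]; simpa using h0

lemma measurable_haarF (p : ℤ×ℤ) : Measurable (haarF p) := by
  unfold haarF
  exact (((measurable_const.indicator (measurableSet_dyad _)).sub
    (measurable_const.indicator (measurableSet_dyad _))).const_mul _)

lemma integrable_haarF (p : ℤ×ℤ) : Integrable (haarF p) := by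
  unfold haarF
  apply Integrable.const_mul
  apply Integrable.sub <;>
  · rw [integrable_indicator_iff (measurableSet_dyad _)]
    exact integrableOn_const (volume_dyad_lt_top _).ne

lemma integral_haarF (p : ℤ×ℤ) : ∫ x, haarF p x = 0 := by
  unfold haarF
  rw [integral_const_mul]
  rw [integral_sub, integral_indicator (measurableSet_dyad _),
      integral_indicator (measurableSet_dyad _)]
  · rw [setIntegral_const, setIntegral_const, measureReal_def, measureReal_def, volume_dyad_toReal, volume_dyad_toReal]
    have : dLen (dLeft p) = dLen (dRight p) := by unfold dLen dLeft dRight; norm_num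
    rw [this]; ring
  all_goals
    rw [integrable_indicator_iff (measurableSet_dyad _)]
    exact integrableOn_const (volume_dyad_lt_top _).ne

lemma haarF_sq (p : ℤ×ℤ) (x : ℝ) :
    (haarF p x)^2 = (dLen p)⁻¹ * (dyad p).indicator (fun _ => (1:ℝ)) x := by
  have hsq : ((Real.sqrt (dLen p))⁻¹)^2 = (dLen p)⁻¹ := by
    rw [← Real.sqrt_inv]
    exact Real.sq_sqrt (inv_nonneg.2 (dLen_pos p).le)
  by_cases hx : x ∈ dyad p
  · rw [Set.indicator_of_mem hx]
    rw [← halves_union p] at hx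
    rcases hx with h | h
    · rw [haarF_left h, hsq]; ring
    · rw [haarF_right h]; rw [neg_pow]; rw [hsq]; ring
  · rw [Set.indicator_of_notMem hx, haarF_eq_zero hx]; ring

lemma integral_haarF_sq (p : ℤ×ℤ) : ∫ x, (haarF p x)^2 = 1 := by
  simp only [haarF_sq]
  rw [integral_const_mul, integral_indicator (measurableSet_dyad _), setIntegral_const,
    measureReal_def, volume_dyad_toReal, smul_eq_mul]
  have := dLen_pos p
  field_simp

lemma haar_orth_aux {q r : ℤ×ℤ} (hne : q ≠ r) (hs : q.1 ≤ r.1) :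
    ∫ x, haarF q x * haarF r x = 0 := by
  have main : (∀ x, haarF q x * haarF r x = 0) ∨
      (∃ c : ℝ, ∀ x, haarF q x * haarF r x = c * haarF q x) := by
    rcases eq_or_lt_of_le hs with hs' | hs'
    · -- same scale : disjoint
      left
      have hdis : Disjoint (dyad q) (dyad r) := by
        rcases dyad_trichotomy r q hs with hsub | hdis
        · exact absurd (eq_of_subset_scale hsub hs') hne
        · exact hdis
      intro x
      by_cases hx : x ∈ dyad q
      · rw [haarF_eq_zero (Set.disjoint_left.1 hdis hx)]; ring
      · rw [haarF_eq_zero hx]; ring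
    · rcases dyad_trichotomy r q hs with hsub | hdis
      · right
        rcases subset_halves hsub hs' with hL | hR
        · refine ⟨(Real.sqrt (dLen r))⁻¹, fun x => ?_⟩
          by_cases hx : x ∈ dyad q
          · rw [haarF_left (hL hx)]; ring
          · rw [haarF_eq_zero hx]; ring
        · refine ⟨-(Real.sqrt (dLen r))⁻¹, fun x => ?_⟩
          by_cases hx : x ∈ dyad q
          · rw [haarF_right (hR hx)]; ring
          · rw [haarF_eq_zero hx]; ring
      · left
        intro x
        by_cases hx : x ∈ dyad q
        · rw [haarF_eq_zero (Set.disjoint_left.1 hdis hx)]; ring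
        · rw [haarF_eq_zero hx]; ring
  rcases main with h | ⟨c, h⟩
  · simp only [h, integral_zero]
  · simp only [h]
    rw [integral_const_mul, integral_haarF]
    ring

lemma haar_orth {q r : ℤ×ℤ} (hne : q ≠ r) : ∫ x, haarF q x * haarF r x = 0 := by
  rcases le_total q.1 r.1 with h | h
  · exact haar_orth_aux hne h
  · have := haar_orth_aux (Ne.symm hne) h
    rw [← this]
    congr 1
    ext x
    ring

end S12

namespace S12

lemma bessel {G : ℤ×ℤ} {f : ℝ→ℝ} (hm : AEStronglyMeasurable f volume)
    (hint : IntegrableOn f (dyad G)) (hint2 : IntegrableOn (fun x => (f x)^2) (dyad G))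
    (T : Finset (ℤ×ℤ)) (hT : ∀ q ∈ T, dyad q ⊆ dyad G) :
    ∑ q ∈ T, (hc f q)^2 ≤ ∫ x in dyad G, (f x)^2 := by
  set g : ℝ → ℝ := (dyad G).indicator f with hg_def
  have hgm : AEStronglyMeasurable g volume := hm.indicator (measurableSet_dyad G)
  have hg : Integrable g := by
    rw [hg_def, integrable_indicator_iff (measurableSet_dyad G)]; exact hint
  have hgsq_eq : ∀ x, (g x)^2 = (dyad G).indicator (fun x => (f x)^2) x := by
    intro x
    by_cases hx : x ∈ dyad G
    · rw [hg_def]; simp [Set.indicator_of_mem hx]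
    · rw [hg_def]; simp [Set.indicator_of_notMem hx]
  have hgsq : Integrable (fun x => (g x)^2) := by
    simp only [hgsq_eq]
    rw [integrable_indicator_iff (measurableSet_dyad G)]; exact hint2
  set c : (ℤ×ℤ) → ℝ := hc f with hc_def
  set P : ℝ → ℝ := fun x => ∑ q ∈ T, c q * haarF q x with hP_def
  have hPm : AEStronglyMeasurable P volume := by
    apply aestronglyMeasurable_iff_aemeasurable.2
    apply Finset.aemeasurable_fun_sum
    intro q _
    exact ((measurable_haarF q).const_mul _).aemeasurable
  have hPbdd : ∃ C, ∀ x, ‖P x‖ ≤ C := by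
    refine ⟨∑ q ∈ T, |c q| * (Real.sqrt (dLen q))⁻¹, fun x => ?_⟩
    rw [hP_def]
    refine le_trans (norm_sum_le _ _) (Finset.sum_le_sum fun q _ => ?_)
    rw [Real.norm_eq_abs, abs_mul]
    exact mul_le_mul_of_nonneg_left (haarF_abs_le q x) (abs_nonneg _)
  have hP : Integrable P := integrable_finset_sum _ (fun q _ => (integrable_haarF q).const_mul _)
  have hPsq : Integrable (fun x => P x * P x) := hP.bdd_mul hPm (Filter.Eventually.of_forall hPbdd.choose_spec)
  have hgP : Integrable (fun x => P x * g x) := hg.bdd_mul hPm (Filter.Eventually.of_forall hPbdd.choose_spec)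
  have hbound : ∀ q : ℤ×ℤ, ∃ C, ∀ x, ‖haarF q x‖ ≤ C := fun q =>
    ⟨(Real.sqrt (dLen q))⁻¹, fun x => by rw [Real.norm_eq_abs]; exact haarF_abs_le q x⟩
  have hgh : ∀ q : ℤ×ℤ, Integrable (fun x => g x * haarF q x) := by
    intro q
    have h1 : Integrable (fun x => haarF q x * g x) :=
      hg.bdd_mul (measurable_haarF q).aestronglyMeasurable (Filter.Eventually.of_forall (hbound q).choose_spec)
    have : (fun x => g x * haarF q x) = fun x => haarF q x * g x := by ext x; ring
    rw [this]; exact h1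
  have hhh : ∀ q r : ℤ×ℤ, Integrable (fun x => haarF q x * haarF r x) := fun q r =>
    (integrable_haarF r).bdd_mul (measurable_haarF q).aestronglyMeasurable (Filter.Eventually.of_forall (hbound q).choose_spec)
  have keyq : ∀ q ∈ T, ∫ x, g x * haarF q x = c q := by
    intro q hq
    have : ∀ x, g x * haarF q x = f x * haarF q x := by
      intro x
      by_cases hx : x ∈ dyad G
      · rw [hg_def, Set.indicator_of_mem hx]
      · rw [haarF_eq_zero (fun hh => hx (hT q hq hh))]; ring
    simp only [this]
    rfl
  have I2 : ∫ x, P x * g x = ∑ q ∈ T, (c q)^2 := by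
    have : ∀ x, P x * g x = ∑ q ∈ T, c q * (g x * haarF q x) := by
      intro x; rw [hP_def]; rw [Finset.sum_mul]; congr 1; ext q; ring
    simp only [this]
    rw [integral_finset_sum _ (fun q _ => (hgh q).const_mul (c q))]
    refine Finset.sum_congr rfl fun q hq => ?_
    rw [integral_const_mul, keyq q hq]; ring
  have I3 : ∀ q ∈ T, ∫ x, haarF q x * P x = c q := by
    intro q hq
    have : ∀ x, haarF q x * P x = ∑ r ∈ T, c r * (haarF q x * haarF r x) := by
      intro x; rw [hP_def]; rw [Finset.mul_sum]; congr 1; ext r; ring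
    simp only [this]
    rw [integral_finset_sum _ (fun r _ => (hhh q r).const_mul (c r))]
    rw [Finset.sum_eq_single q]
    · rw [integral_const_mul]
      have : ∫ x, haarF q x * haarF q x = 1 := by
        rw [← integral_haarF_sq q]; congr 1; ext x; ring
      rw [this]; ring
    · intro r _ hrq
      rw [integral_const_mul, haar_orth hrq.symm]
      ring
    · intro h; exact absurd hq h
  have I4 : ∫ x, P x * P x = ∑ q ∈ T, (c q)^2 := by
    have : ∀ x, P x * P x = ∑ q ∈ T, c q * (haarF q x * P x) := by
      intro x; conv_lhs => rw [hP_def]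
      rw [Finset.sum_mul]; congr 1; ext q; ring
    simp only [this]
    have hint' : ∀ q ∈ T, Integrable (fun x => c q * (haarF q x * P x)) := by
      intro q _
      exact (hP.bdd_mul (measurable_haarF q).aestronglyMeasurable (Filter.Eventually.of_forall (hbound q).choose_spec)).const_mul (c q)
    rw [integral_finset_sum _ hint']
    refine Finset.sum_congr rfl fun q hq => ?_
    rw [integral_const_mul, I3 q hq]; ring
  have hnn : 0 ≤ ∫ x, (g x - P x)^2 := integral_nonneg fun x => sq_nonneg _
  have expand : ∀ x, (g x - P x)^2 = ((g x)^2 + P x * P x) - 2*(P x * g x) := by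
    intro x; ring
  have hsplit : ∫ x, (g x - P x)^2 =
      ((∫ x, (g x)^2) + ∫ x, P x * P x) - 2 * ∫ x, P x * g x := by
    simp only [expand]
    have hsum : Integrable (fun x => (g x)^2 + P x * P x) := hgsq.add hPsq
    have h2' : Integrable (fun x => 2 * (P x * g x)) := hgP.const_mul 2
    rw [integral_sub hsum h2', integral_const_mul, integral_add hgsq hPsq]
  have hgsq_int : ∫ x, (g x)^2 = ∫ x in dyad G, (f x)^2 := by
    simp only [hgsq_eq]
    rw [integral_indicator (measurableSet_dyad G)]
  rw [hsplit, hgsq_int, I2, I4] at hnn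
  linarith

end S12

namespace S12

section Weight
variable {w : ℝ → ℝ} (hw : ∀ x, 0 < w x) (hwi : LocallyIntegrable w volume)
  (hsi : LocallyIntegrable (fun x => (w x)⁻¹) volume)

lemma dyad_subset_Icc (p : ℤ×ℤ) : dyad p ⊆ Icc (lep p) (rep p) := by
  rw [dyad_eq]; exact Ico_subset_Icc_self

lemma intOn_dyad {g : ℝ → ℝ} (hg : LocallyIntegrable g volume) (p : ℤ×ℤ) :
    IntegrableOn g (dyad p) := by
  exact (hg.integrableOn_isCompact isCompact_Icc).mono_set (dyad_subset_Icc p)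

include hwi hw in
lemma wInt_pos (p : ℤ×ℤ) : 0 < ∫ x in dyad p, w x := by
  rw [setIntegral_pos_iff_support_of_nonneg_ae
    (Filter.Eventually.of_forall fun x => (hw x).le) (intOn_dyad hwi p)]
  have : (Function.support w) ∩ dyad p = dyad p := by
    apply Set.inter_eq_self_of_subset_right
    intro x _
    exact (hw x).ne'
  rw [this, volume_dyad]
  exact ENNReal.ofReal_pos.2 (dLen_pos p)

include hwi hw in
lemma avg_pos (p : ℤ×ℤ) : 0 < avg w p := by
  unfold avg
  exact mul_pos (inv_pos.2 (dLen_pos p)) (wInt_pos hw hwi p)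

include hw in
lemma sqrtw_inv_eq (x : ℝ) : (Real.sqrt (w x))⁻¹ = Real.sqrt ((w x)⁻¹) := by
  rw [Real.sqrt_inv]

include hwi in
lemma aesm_sqrtw_inv : AEStronglyMeasurable (fun x => (Real.sqrt (w x))⁻¹) volume := by
  apply aestronglyMeasurable_iff_aemeasurable.2
  exact (Real.continuous_sqrt.measurable.comp_aemeasurable
    hwi.aestronglyMeasurable.aemeasurable).inv

include hw hwi hsi in
lemma intOn_sqrt (p : ℤ×ℤ) : IntegrableOn (fun x => (Real.sqrt (w x))⁻¹) (dyad p) := by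
  have hgi : IntegrableOn (fun x => (w x)⁻¹ + 1) (dyad p) :=
    (intOn_dyad hsi p).add (integrableOn_const (volume_dyad_lt_top p).ne)
  apply Integrable.mono' hgi (aesm_sqrtw_inv hwi).restrict
  filter_upwards with x
  rw [Real.norm_eq_abs, abs_of_nonneg (by positivity), sqrtw_inv_eq hw]
  have h0 : (0:ℝ) ≤ (w x)⁻¹ := inv_nonneg.2 (hw x).le
  rw [Real.sqrt_le_left (by linarith)]
  nlinarith

include hw in
lemma sqrtw_inv_sq (x : ℝ) : ((Real.sqrt (w x))⁻¹)^2 = (w x)⁻¹ := by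
  rw [sqrtw_inv_eq hw, Real.sq_sqrt (inv_nonneg.2 (hw x).le)]

include hw in
lemma cs_on_set {E : Set ℝ} (hE : MeasurableSet E)
    (hwE : IntegrableOn w E) (hsE : IntegrableOn (fun x => (w x)⁻¹) E)
    (hvol : volume E < ⊤) :
    ((volume E).toReal)^2 ≤ (∫ x in E, w x) * (∫ x in E, (w x)⁻¹) := by
  have key : ∀ t : ℝ, 0 ≤ (∫ x in E, w x) * (t * t) + (-2*(volume E).toReal) * t
      + ∫ x in E, (w x)⁻¹ := by
    intro t
    have hpt : ∀ x, (t * Real.sqrt (w x) - (Real.sqrt (w x))⁻¹)^2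
        = (w x * (t*t) + (-2*t) + (w x)⁻¹) := by
      intro x
      have h1 : Real.sqrt (w x) * Real.sqrt (w x) = w x := Real.mul_self_sqrt (hw x).le
      have h2 : Real.sqrt (w x) * (Real.sqrt (w x))⁻¹ = 1 := by
        rw [mul_inv_cancel₀]
        exact Real.sqrt_ne_zero'.2 (hw x)
      have h3 : ((Real.sqrt (w x))⁻¹)^2 = (w x)⁻¹ := sqrtw_inv_sq hw x
      have expand : (t * Real.sqrt (w x) - (Real.sqrt (w x))⁻¹)^2
          = (Real.sqrt (w x)*Real.sqrt (w x))*(t*t)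
            - 2*t*(Real.sqrt (w x)*(Real.sqrt (w x))⁻¹) + ((Real.sqrt (w x))⁻¹)^2 := by ring
      rw [expand, h1, h2, h3]; ring
    have hnn : 0 ≤ ∫ x in E, (t * Real.sqrt (w x) - (Real.sqrt (w x))⁻¹)^2 :=
      integral_nonneg fun x => sq_nonneg _
    have hconst : IntegrableOn (fun _ : ℝ => (-2*t : ℝ)) E :=
      integrableOn_const hvol.ne
    have h2' : IntegrableOn (fun x => w x * (t*t) + (-2*t)) E := (hwE.mul_const _).add hconst
    have heq : ∫ x in E, (t * Real.sqrt (w x) - (Real.sqrt (w x))⁻¹)^2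
        = ((∫ x in E, w x) * (t*t) + (-2*t) * (volume E).toReal) + ∫ x in E, (w x)⁻¹ := by
      simp only [hpt]
      rw [integral_add h2' hsE, integral_add (hwE.mul_const _) hconst,
        integral_mul_const, setIntegral_const, measureReal_def]
      rw [smul_eq_mul]
      ring
    rw [heq] at hnn
    nlinarith [hnn]
  have := discrim_le_zero key
  rw [discrim] at this
  nlinarith [this]

end Weight
end S12

namespace S12

open Classical in
def stopF (w : ℝ → ℝ) (p : ℤ×ℤ) (q : ℤ×ℤ) : ℤ×ℤ :=
  if h : dyad q ⊆ dyad p ∧ q ≠ p then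
    let G := stopF w p (dParent q)
    if 2 * avg w G < avg w q then q else G
  else q
termination_by (p.1 - q.1).toNat
decreasing_by
  have h1 := scale_lt_of_ssubset h.1 h.2
  rw [parent_scale]
  omega

section Stopping
variable {w : ℝ → ℝ} (hw : ∀ x, 0 < w x) (hwi : LocallyIntegrable w volume) (p : ℤ×ℤ)

lemma stopF_top : stopF w p p = p := by
  rw [stopF]
  simp

include hw hwi in
lemma stopF_props : ∀ n : ℕ, ∀ q : ℤ×ℤ, (p.1 - q.1).toNat = n → dyad q ⊆ dyad p →
    (dyad q ⊆ dyad (stopF w p q) ∧ dyad (stopF w p q) ⊆ dyad p) ∧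
    stopF w p (stopF w p q) = stopF w p q ∧
    avg w q ≤ 2 * avg w (stopF w p q) ∧
    (∃ m : ℕ, stopF w p q = dParent^[m] q) := by
  intro n
  induction n using Nat.strong_induction_on with
  | _ n ih =>
    intro q hn hq
    by_cases hqp : q = p
    · subst hqp
      rw [stopF_top]
      exact ⟨⟨hq, hq⟩, stopF_top q, by linarith [avg_pos hw hwi q], ⟨0, rfl⟩⟩
    · have hlt := scale_lt_of_ssubset hq hqp
      have hpar : dyad (dParent q) ⊆ dyad p := parent_subset_of_ssubset hq hqp
      have hm : (p.1 - (dParent q).1).toNat < n := by rw [parent_scale]; omega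
      obtain ⟨⟨hsub1, hsub2⟩, hidem, havg, m, hit⟩ := ih _ hm (dParent q) rfl hpar
      rw [stopF]
      rw [dif_pos ⟨hq, hqp⟩]
      simp only []
      by_cases hstop : 2 * avg w (stopF w p (dParent q)) < avg w q
      · rw [if_pos hstop]
        refine ⟨⟨le_refl _, hq⟩, ?_, by linarith [avg_pos hw hwi q], ⟨0, rfl⟩⟩
        rw [stopF, dif_pos ⟨hq, hqp⟩]
        simp only []
        rw [if_pos hstop]
      · rw [if_neg hstop]
        push_neg at hstop
        refine ⟨⟨(subset_parent q).trans hsub1, hsub2⟩, hidem, hstop, ⟨m+1, ?_⟩⟩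
        rw [hit, ← Function.iterate_succ_apply]

include hw hwi in
lemma stopF_basic {q : ℤ×ℤ} (hq : dyad q ⊆ dyad p) :
    (dyad q ⊆ dyad (stopF w p q) ∧ dyad (stopF w p q) ⊆ dyad p) ∧
    stopF w p (stopF w p q) = stopF w p q ∧
    avg w q ≤ 2 * avg w (stopF w p q) ∧
    (∃ m : ℕ, stopF w p q = dParent^[m] q) :=
  stopF_props hw hwi p _ q rfl hq

lemma stopF_below {G : ℤ×ℤ} (hG : dyad G ⊆ dyad p) (hfix : stopF w p G = G) :
    ∀ n : ℕ, ∀ q : ℤ×ℤ, (G.1 - q.1).toNat = n → dyad q ⊆ dyad G →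
    dyad (stopF w p q) ⊆ dyad G := by
  intro n
  induction n using Nat.strong_induction_on with
  | _ n ih =>
    intro q hn hq
    by_cases hqG : q = G
    · subst hqG; rw [hfix]
    · have hlt := scale_lt_of_ssubset hq hqG
      have hqp : dyad q ⊆ dyad p := hq.trans hG
      have hqnp : q ≠ p := by
        intro h
        subst h
        exact hqG (dyad_inj (le_antisymm hG hq)).symm
      have hpar : dyad (dParent q) ⊆ dyad G := parent_subset_of_ssubset hq hqG
      have hm : (G.1 - (dParent q).1).toNat < n := by rw [parent_scale]; omega
      rw [stopF, dif_pos ⟨hqp, hqnp⟩]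
      simp only []
      by_cases hstop : 2 * avg w (stopF w p (dParent q)) < avg w q
      · rw [if_pos hstop]; exact hq
      · rw [if_neg hstop]
        exact ih _ hm (dParent q) rfl hpar

include hw hwi in
lemma stopF_new {G : ℤ×ℤ} (hG : dyad G ⊆ dyad p) (hGp : G ≠ p) (hfix : stopF w p G = G) :
    2 * avg w (stopF w p (dParent G)) < avg w G := by
  by_contra hcon
  have h1 : stopF w p G = stopF w p (dParent G) := by
    rw [stopF, dif_pos ⟨hG, hGp⟩]
    simp only []
    rw [if_neg hcon]
  have h2 := (stopF_basic hw hwi p (parent_subset_of_ssubset hG hGp)).1.1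
  rw [← h1, hfix] at h2
  have h3 : dyad (dParent G) = dyad G := le_antisymm h2 (subset_parent G)
  have h4 : dParent G = G := dyad_inj h3
  have h5 : (dParent G).1 = G.1 := by rw [h4]
  rw [parent_scale] at h5
  omega

end Stopping
end S12

namespace S12

section Family
variable {w : ℝ → ℝ} (hw : ∀ x, 0 < w x) (hwi : LocallyIntegrable w volume)
  (hsi : LocallyIntegrable (fun x => (w x)⁻¹) volume)
  {A : ℝ} (hA : ∀ r : ℤ×ℤ, avg w r * avg (fun x => (w x)⁻¹) r ≤ A)

include hA in
lemma a2_int (r : ℤ×ℤ) :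
    (∫ x in dyad r, w x) * (∫ x in dyad r, (w x)⁻¹) ≤ A * (dLen r)^2 := by
  have hA' := hA r
  unfold avg at hA'
  simp only [] at hA'
  have hl := dLen_pos r
  have h3 := mul_le_mul_of_nonneg_left hA' (mul_pos hl hl).le
  have h4 : dLen r * dLen r * (((dLen r)⁻¹ * ∫ x in dyad r, w x) *
      ((dLen r)⁻¹ * ∫ x in dyad r, (w x)⁻¹))
      = (∫ x in dyad r, w x) * (∫ x in dyad r, (w x)⁻¹) := by
    field_simp
  rw [h4] at h3
  nlinarith [h3]

include hw hwi hsi hA in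
lemma one_le_A (r : ℤ×ℤ) : 1 ≤ A := by
  have hcs := cs_on_set hw (measurableSet_dyad r) (intOn_dyad hwi r) (intOn_dyad hsi r)
    (volume_dyad_lt_top r)
  have hA' := a2_int hA r
  have hl := dLen_pos r
  rw [volume_dyad_toReal] at hcs
  nlinarith [hcs, hA', mul_pos hl hl]

include hw hwi hsi in
lemma sInt_pos (r : ℤ×ℤ) : 0 < ∫ x in dyad r, (w x)⁻¹ := by
  exact wInt_pos (fun x => inv_pos.2 (hw x)) hsi r

include hw hwi hsi hA in
lemma a2_key (r : ℤ×ℤ) :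
    (avg w r)^2 * (∫ x in dyad r, (w x)⁻¹) ≤ A * ∫ x in dyad r, w x := by
  have hA' := a2_int hA r
  unfold avg
  have hl := dLen_pos r
  have hwr := wInt_pos hw hwi r
  have h1 : (0:ℝ) < (dLen r)⁻¹ := inv_pos.2 hl
  have h4 : ((dLen r)⁻¹ * ∫ x in dyad r, w x)^2 * (∫ x in dyad r, (w x)⁻¹)
      = ((dLen r)⁻¹ * (dLen r)⁻¹ * ∫ x in dyad r, w x) *
        ((∫ x in dyad r, w x) * (∫ x in dyad r, (w x)⁻¹)) := by ring
  rw [h4]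
  have h5 : ((dLen r)⁻¹ * (dLen r)⁻¹ * ∫ x in dyad r, w x) *
      ((∫ x in dyad r, w x) * (∫ x in dyad r, (w x)⁻¹))
      ≤ ((dLen r)⁻¹ * (dLen r)⁻¹ * ∫ x in dyad r, w x) * (A * (dLen r)^2) :=
    mul_le_mul_of_nonneg_left hA' (by positivity)
  refine h5.trans (le_of_eq ?_)
  field_simp

include hw hwi hsi hA in
lemma thickness {H : ℤ×ℤ} {E : Set ℝ} (hE : MeasurableSet E) (hEsub : E ⊆ dyad H)
    (hvol : dLen H / 2 ≤ (volume E).toReal) :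
    ∫ x in dyad H, w x ≤ 4 * A * ∫ x in E, w x := by
  have hvE : volume E < ⊤ := lt_of_le_of_lt (measure_mono hEsub) (volume_dyad_lt_top H)
  have hwE : IntegrableOn w E := (intOn_dyad hwi H).mono_set hEsub
  have hsE : IntegrableOn (fun x => (w x)⁻¹) E := (intOn_dyad hsi H).mono_set hEsub
  have hcs := cs_on_set hw hE hwE hsE hvE
  have hmono : (∫ x in E, (w x)⁻¹) ≤ ∫ x in dyad H, (w x)⁻¹ :=
    setIntegral_mono_set (intOn_dyad hsi H)
      (Filter.Eventually.of_forall fun x => (inv_pos.2 (hw x)).le)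
      (Filter.Eventually.of_forall hEsub)
  have hA' := hA H
  unfold avg at hA'
  have hl := dLen_pos H
  have hwH := wInt_pos hw hwi H
  have hsH := sInt_pos hw hwi hsi H
  have hwEnn : 0 ≤ ∫ x in E, w x := setIntegral_nonneg hE fun x _ => (hw x).le
  have hsEnn : 0 ≤ ∫ x in E, (w x)⁻¹ :=
    setIntegral_nonneg hE fun x _ => (inv_pos.2 (hw x)).le
  have h1 : (0:ℝ) < (dLen H)⁻¹ := inv_pos.2 hl
  -- (dLen H / 2)^2 ≤ vE^2 ≤ wE * sE ≤ wE * sH ; wH * sH ≤ A * l^2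
  have hA2 : (∫ x in dyad H, w x) * (∫ x in dyad H, (w x)⁻¹) ≤ A * (dLen H)^2 :=
    a2_int hA H
  have hvE2 : (dLen H / 2)^2 ≤ (∫ x in E, w x) * (∫ x in dyad H, (w x)⁻¹) := by
    have h3 : ((volume E).toReal)^2 ≤ (∫ x in E, w x) * (∫ x in dyad H, (w x)⁻¹) :=
      le_trans hcs (mul_le_mul_of_nonneg_left hmono hwEnn)
    have h4 : (dLen H / 2)^2 ≤ ((volume E).toReal)^2 := by
      apply sq_le_sq'
      · nlinarith [ENNReal.toReal_nonneg (a := volume E)]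
      · exact hvol
    linarith
  nlinarith [mul_le_mul_of_nonneg_left hA2 hwEnn,
    mul_le_mul_of_nonneg_left hvE2 hwH.le, sq_nonneg (dLen H), mul_pos hl hl, hsH]

end Family
end S12

namespace S12

section Carleson
variable {w : ℝ → ℝ} (hw : ∀ x, 0 < w x) (hwi : LocallyIntegrable w volume)
  (hsi : LocallyIntegrable (fun x => (w x)⁻¹) volume)
  {A : ℝ} (hA : ∀ r : ℤ×ℤ, avg w r * avg (fun x => (w x)⁻¹) r ≤ A)
  {p : ℤ×ℤ} {S : Finset (ℤ×ℤ)}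
  (hSsub : ∀ G ∈ S, dyad G ⊆ dyad p)
  (hSfix : ∀ G ∈ S, stopF w p G = G)
  (hSclosed : ∀ G ∈ S, G ≠ p → stopF w p (dParent G) ∈ S)

/-- stopping children of `H` inside the family `S`. -/
def childS (w : ℝ → ℝ) (p : ℤ×ℤ) (S : Finset (ℤ×ℤ)) (H : ℤ×ℤ) : Finset (ℤ×ℤ) :=
  S.filter (fun G => G ≠ p ∧ stopF w p (dParent G) = H)

include hw hwi hSsub hSfix in
lemma childS_basic {H G : ℤ×ℤ} (hG : G ∈ childS w p S H) :
    dyad G ⊆ dyad H ∧ G ≠ H ∧ 2 * avg w H < avg w G ∧ G ∈ S := by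
  rw [childS, Finset.mem_filter] at hG
  obtain ⟨hGS, hGp, hGpar⟩ := hG
  have hGsub : dyad G ⊆ dyad p := hSsub G hGS
  have hparp : dyad (dParent G) ⊆ dyad p := parent_subset_of_ssubset hGsub hGp
  have h1 : dyad (dParent G) ⊆ dyad H := by
    rw [← hGpar]; exact (stopF_basic hw hwi p hparp).1.1
  have h2 : dyad G ⊆ dyad H := (subset_parent G).trans h1
  have hscale : G.1 + 1 ≤ H.1 := by
    have := scale_le_of_subset h1
    rw [parent_scale] at this
    omega
  have hGH : G ≠ H := fun h => by rw [h] at hscale; omega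
  have hnew := stopF_new hw hwi p hGsub hGp (hSfix G hGS)
  rw [hGpar] at hnew
  exact ⟨h2, hGH, hnew, hGS⟩

include hw hwi hSsub hSfix in
lemma childS_disjoint {H : ℤ×ℤ} :
    ∀ G₁ ∈ childS w p S H, ∀ G₂ ∈ childS w p S H, G₁ ≠ G₂ →
      Disjoint (dyad G₁) (dyad G₂) := by
  have key : ∀ G₁ ∈ childS w p S H, ∀ G₂ ∈ childS w p S H, G₁ ≠ G₂ →
      dyad G₁ ⊆ dyad G₂ → False := by
    intro G₁ hG₁ G₂ hG₂ hne hsub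
    obtain ⟨h2sub, h2ne, _, h2S⟩ := childS_basic hw hwi hSsub hSfix hG₂
    rw [childS, Finset.mem_filter] at hG₁
    obtain ⟨h1S, h1p, h1par⟩ := hG₁
    have hparsub : dyad (dParent G₁) ⊆ dyad G₂ := parent_subset_of_ssubset hsub hne
    have hHsub : dyad (stopF w p (dParent G₁)) ⊆ dyad G₂ :=
      stopF_below p (hSsub G₂ h2S) (hSfix G₂ h2S) _ (dParent G₁) rfl hparsub
    rw [h1par] at hHsub
    exact h2ne (dyad_inj (le_antisymm h2sub hHsub))
  intro G₁ hG₁ G₂ hG₂ hne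
  rcases le_total G₁.1 G₂.1 with hs | hs
  · rcases dyad_trichotomy G₂ G₁ hs with hsub | hdis
    · exact absurd (key G₁ hG₁ G₂ hG₂ hne hsub) (by simp)
    · exact hdis
  · rcases dyad_trichotomy G₁ G₂ hs with hsub | hdis
    · exact absurd (key G₂ hG₂ G₁ hG₁ hne.symm hsub) (by simp)
    · exact hdis.symm

include hw hwi hSsub hSfix hSclosed in
lemma exists_child {H : ℤ×ℤ} (hH : H ∈ S) :
    ∀ n : ℕ, ∀ G ∈ S, (H.1 - G.1).toNat = n → dyad G ⊆ dyad H → G ≠ H →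
    ∃ C ∈ childS w p S H, dyad G ⊆ dyad C := by
  intro n
  induction n using Nat.strong_induction_on with
  | _ n ih =>
    intro G hGS hn hGH hne
    have hGp' : dyad G ⊆ dyad p := hSsub G hGS
    have hGnp : G ≠ p := by
      intro h
      subst h
      exact hne (dyad_inj (le_antisymm (hSsub H hH) hGH)).symm
    have hparH : dyad (dParent G) ⊆ dyad H := parent_subset_of_ssubset hGH hne
    have hparp : dyad (dParent G) ⊆ dyad p := hparH.trans (hSsub H hH)
    set G' := stopF w p (dParent G) with hG'def
    have hG'S : G' ∈ S := hSclosed G hGS hGnp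
    have hG'sub : dyad (dParent G) ⊆ dyad G' := (stopF_basic hw hwi p hparp).1.1
    have hGsubG' : dyad G ⊆ dyad G' := (subset_parent G).trans hG'sub
    have hG'H : dyad G' ⊆ dyad H :=
      stopF_below p (hSsub H hH) (hSfix H hH) _ (dParent G) rfl hparH
    by_cases hcase : G' = H
    · refine ⟨G, ?_, le_refl _⟩
      rw [childS, Finset.mem_filter]
      exact ⟨hGS, hGnp, hcase⟩
    · have hsc1 : G.1 + 1 ≤ G'.1 := by
        have := scale_le_of_subset hG'sub
        rw [parent_scale] at this
        omega
      have hsc2 : G'.1 ≤ H.1 := scale_le_of_subset hG'H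
      have hsc3 : G.1 < H.1 := scale_lt_of_ssubset hGH hne
      have hm : (H.1 - G'.1).toNat < n := by omega
      obtain ⟨C, hC, hsub⟩ := ih _ hm G' hG'S rfl hG'H hcase
      exact ⟨C, hC, hGsubG'.trans hsub⟩

end Carleson
end S12

namespace S12
section Carleson2
variable {w : ℝ → ℝ} (hw : ∀ x, 0 < w x) (hwi : LocallyIntegrable w volume)
  (hsi : LocallyIntegrable (fun x => (w x)⁻¹) volume)
  {A : ℝ} (hA : ∀ r : ℤ×ℤ, avg w r * avg (fun x => (w x)⁻¹) r ≤ A)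
  {p : ℤ×ℤ} {S : Finset (ℤ×ℤ)}
  (hSsub : ∀ G ∈ S, dyad G ⊆ dyad p)
  (hSfix : ∀ G ∈ S, stopF w p G = G)
  (hSclosed : ∀ G ∈ S, G ≠ p → stopF w p (dParent G) ∈ S)

include hw hwi hsi hA hSsub hSfix hSclosed in
open Classical in
lemma carleson : ∀ n : ℕ, ∀ H ∈ S, (S.filter (fun G => dyad G ⊆ dyad H ∧ G ≠ H)).card = n →
    ∑ G ∈ S.filter (fun G => dyad G ⊆ dyad H), (∫ x in dyad G, w x)
      ≤ 4 * A * ∫ x in dyad H, w x := by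
  intro n
  induction n using Nat.strong_induction_on with
  | _ n ih =>
    intro H hH hn
    have hAone : 1 ≤ A := one_le_A hw hwi hsi hA p
    set ch := childS w p S H with hch
    have hbasic : ∀ C ∈ ch, dyad C ⊆ dyad H ∧ C ≠ H ∧ 2 * avg w H < avg w C ∧ C ∈ S :=
      fun C hC => childS_basic hw hwi hSsub hSfix hC
    have hdisj : (↑ch : Set (ℤ×ℤ)).Pairwise (Function.onFun Disjoint (fun C => dyad C)) :=
      fun C₁ h₁ C₂ h₂ hne => childS_disjoint hw hwi hSsub hSfix C₁ h₁ C₂ h₂ hne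
    set U : Set ℝ := ⋃ C ∈ ch, dyad C with hU
    have hUmeas : MeasurableSet U := Finset.measurableSet_biUnion _ fun C _ => measurableSet_dyad C
    have hUsub : U ⊆ dyad H := Set.iUnion₂_subset fun C hC => (hbasic C hC).1
    have hwU : ∫ x in U, w x = ∑ C ∈ ch, ∫ x in dyad C, w x :=
      integral_biUnion_finset ch (fun C _ => measurableSet_dyad C) hdisj
        (fun C _ => intOn_dyad hwi C)
    have hvolU : volume U = ∑ C ∈ ch, volume (dyad C) :=
      measure_biUnion_finset hdisj (fun C _ => measurableSet_dyad C)
    have hvolU' : (volume U).toReal = ∑ C ∈ ch, dLen C := by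
      rw [hvolU, ENNReal.toReal_sum (fun C _ => (volume_dyad_lt_top C).ne)]
      exact Finset.sum_congr rfl fun C _ => volume_dyad_toReal C
    have havgH := avg_pos hw hwi H
    have hwHeq : ∫ x in dyad H, w x = dLen H * avg w H := by
      unfold avg
      rw [← mul_assoc, mul_inv_cancel₀ (dLen_pos H).ne', one_mul]
    have hwmono : ∫ x in U, w x ≤ ∫ x in dyad H, w x :=
      setIntegral_mono_set (intOn_dyad hwi H)
        (Filter.Eventually.of_forall fun x => (hw x).le)
        (Filter.Eventually.of_forall hUsub)
    have hlen : ∑ C ∈ ch, dLen C ≤ dLen H / 2 := by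
      have h1 : ∀ C ∈ ch, 2 * avg w H * dLen C ≤ ∫ x in dyad C, w x := by
        intro C hC
        have h2 := (hbasic C hC).2.2.1
        have hlC := dLen_pos C
        have : avg w C * dLen C = ∫ x in dyad C, w x := by unfold avg; field_simp
        nlinarith [h2, hlC]
      have h3 : 2 * avg w H * ∑ C ∈ ch, dLen C ≤ ∑ C ∈ ch, ∫ x in dyad C, w x := by
        rw [Finset.mul_sum]
        exact Finset.sum_le_sum h1
      rw [← hwU] at h3
      have h4 : 2 * avg w H * ∑ C ∈ ch, dLen C ≤ dLen H * avg w H := by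
        rw [← hwHeq]; linarith
      nlinarith [h4, havgH]
    set E : Set ℝ := dyad H \ U with hE
    have hEmeas : MeasurableSet E := (measurableSet_dyad H).diff hUmeas
    have hEsub : E ⊆ dyad H := Set.diff_subset
    have hvolUne : volume U ≠ ⊤ :=
      (lt_of_le_of_lt (measure_mono hUsub) (volume_dyad_lt_top H)).ne
    have hvolE : (volume E).toReal = dLen H - ∑ C ∈ ch, dLen C := by
      rw [hE, measure_diff hUsub hUmeas.nullMeasurableSet hvolUne,
        ENNReal.toReal_sub_of_le (measure_mono hUsub) (volume_dyad_lt_top H).ne,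
        volume_dyad_toReal, hvolU']
    have hvolE2 : dLen H / 2 ≤ (volume E).toReal := by rw [hvolE]; linarith
    have hthick := thickness hw hwi hsi hA hEmeas hEsub hvolE2
    have hsplit : ∫ x in dyad H, w x = (∫ x in E, w x) + ∫ x in U, w x := by
      rw [← setIntegral_union Set.disjoint_sdiff_left hUmeas
        ((intOn_dyad hwi H).mono_set hEsub) ((intOn_dyad hwi H).mono_set hUsub),
        Set.diff_union_of_subset hUsub]
    have hchsum : ∑ C ∈ ch, ∫ x in dyad C, w x
        ≤ (∫ x in dyad H, w x) - (∫ x in dyad H, w x) / (4*A) := by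
      have h5 : (∫ x in dyad H, w x) / (4*A) ≤ ∫ x in E, w x := by
        rw [div_le_iff₀ (by linarith)]
        linarith [hthick]
      rw [← hwU]
      linarith [hsplit, h5]
    -- decompose the descendant sum
    set Dfull := S.filter (fun G => dyad G ⊆ dyad H) with hDfull
    have hHD : H ∈ Dfull := by
      rw [hDfull, Finset.mem_filter]; exact ⟨hH, le_refl _⟩
    have hsum1 : ∑ G ∈ Dfull, (∫ x in dyad G, w x)
        = (∫ x in dyad H, w x) + ∑ G ∈ Dfull.erase H, (∫ x in dyad G, w x) :=
      (Finset.add_sum_erase _ _ hHD).symm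
    have herase : Dfull.erase H = ch.biUnion (fun C => S.filter (fun G => dyad G ⊆ dyad C)) := by
      ext G
      rw [Finset.mem_erase, hDfull, Finset.mem_filter, Finset.mem_biUnion]
      constructor
      · rintro ⟨hne, hGS, hGH⟩
        obtain ⟨C, hC, hsub⟩ := exists_child hw hwi hSsub hSfix hSclosed hH _ G hGS rfl hGH hne
        exact ⟨C, hC, Finset.mem_filter.2 ⟨hGS, hsub⟩⟩
      · rintro ⟨C, hC, hGfil⟩
        rw [Finset.mem_filter] at hGfil
        obtain ⟨hGS, hGC⟩ := hGfil
        have hCH := hbasic C hC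
        refine ⟨fun h => ?_, hGS, hGC.trans hCH.1⟩
        subst h
        exact hCH.2.1 (dyad_inj (le_antisymm hCH.1 hGC))
    have hdisjF : ∀ C₁ ∈ ch, ∀ C₂ ∈ ch, C₁ ≠ C₂ →
        Disjoint (S.filter (fun G => dyad G ⊆ dyad C₁)) (S.filter (fun G => dyad G ⊆ dyad C₂)) := by
      intro C₁ h₁ C₂ h₂ hne
      rw [Finset.disjoint_left]
      intro G hg1 hg2
      rw [Finset.mem_filter] at hg1 hg2
      obtain ⟨x, hx⟩ := dyad_nonempty G
      exact Set.disjoint_left.1 (hdisj h₁ h₂ hne) (hg1.2 hx) (hg2.2 hx)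
    have hsum2 : ∑ G ∈ Dfull.erase H, (∫ x in dyad G, w x)
        = ∑ C ∈ ch, ∑ G ∈ S.filter (fun G => dyad G ⊆ dyad C), (∫ x in dyad G, w x) := by
      rw [herase]
      exact Finset.sum_biUnion hdisjF
    have hIH : ∀ C ∈ ch, ∑ G ∈ S.filter (fun G => dyad G ⊆ dyad C), (∫ x in dyad G, w x)
        ≤ 4 * A * ∫ x in dyad C, w x := by
      intro C hC
      obtain ⟨hCsub, hCH, _, hCS⟩ := hbasic C hC
      have hcard : (S.filter (fun G => dyad G ⊆ dyad C ∧ G ≠ C)).card < n := by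
        have hsub : S.filter (fun G => dyad G ⊆ dyad C ∧ G ≠ C)
            ⊆ (S.filter (fun G => dyad G ⊆ dyad H ∧ G ≠ H)).erase C := by
          intro G hG
          rw [Finset.mem_filter] at hG
          obtain ⟨hGS, hGC, hGneC⟩ := hG
          rw [Finset.mem_erase, Finset.mem_filter]
          refine ⟨hGneC, hGS, hGC.trans hCsub, fun h => ?_⟩
          subst h
          exact hCH (dyad_inj (le_antisymm hCsub hGC))
        have hCin : C ∈ S.filter (fun G => dyad G ⊆ dyad H ∧ G ≠ H) :=
          Finset.mem_filter.2 ⟨hCS, hCsub, hCH⟩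
        have h6 := Finset.card_le_card hsub
        rw [Finset.card_erase_of_mem hCin, hn] at h6
        have h7 : 1 ≤ n := by
          rw [← hn]
          exact Finset.card_pos.2 ⟨C, hCin⟩
        omega
      exact ih _ hcard C hCS rfl
    have hsum3 : ∑ C ∈ ch, ∑ G ∈ S.filter (fun G => dyad G ⊆ dyad C), (∫ x in dyad G, w x)
        ≤ 4 * A * ((∫ x in dyad H, w x) - (∫ x in dyad H, w x) / (4*A)) := by
      calc _ ≤ ∑ C ∈ ch, 4 * A * ∫ x in dyad C, w x := Finset.sum_le_sum hIH
      _ = 4 * A * ∑ C ∈ ch, ∫ x in dyad C, w x := by rw [Finset.mul_sum]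
      _ ≤ _ := mul_le_mul_of_nonneg_left hchsum (by linarith)
    have hfinal : 4 * A * ((∫ x in dyad H, w x) - (∫ x in dyad H, w x) / (4*A))
        = 4 * A * (∫ x in dyad H, w x) - (∫ x in dyad H, w x) := by
      field_simp
    rw [hsum1, hsum2]
    rw [hfinal] at hsum3
    linarith

end Carleson2
end S12

namespace S12

lemma iterate_scale : ∀ n : ℕ, ∀ q : ℤ×ℤ, (dParent^[n] q).1 = q.1 + n := by
  intro n
  induction n with
  | zero => intro q; simp
  | succ n ih =>
    intro q
    rw [Function.iterate_succ_apply', parent_scale, ih]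
    omega

lemma scale_ne_imp {G p : ℤ×ℤ} (h : G.1 ≠ p.1) : G ≠ p := fun hh => h (by rw [hh])

lemma iterate_subset {p : ℤ×ℤ} : ∀ n : ℕ, ∀ q : ℤ×ℤ, dyad q ⊆ dyad p → q.1 + n ≤ p.1 →
    dyad (dParent^[n] q) ⊆ dyad p := by
  intro n
  induction n with
  | zero => intro q hq _; simpa using hq
  | succ n ih =>
    intro q hq hsc
    have h1 : dyad (dParent^[n] q) ⊆ dyad p := ih q hq (by omega)
    have h2 : (dParent^[n] q).1 = q.1 + n := iterate_scale n q
    have h3 : dParent^[n] q ≠ p := scale_ne_imp (by omega)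
    rw [Function.iterate_succ_apply']
    exact parent_subset_of_ssubset h1 h3

open Classical in
def famA (p : ℤ×ℤ) (F : Finset (ℤ×ℤ)) : Finset (ℤ×ℤ) :=
  F.biUnion (fun f => (Finset.range ((p.1 - f.1).toNat + 1)).image (fun n => dParent^[n] f))

lemma mem_famA {p : ℤ×ℤ} {F : Finset (ℤ×ℤ)} {q : ℤ×ℤ} :
    q ∈ famA p F ↔ ∃ f ∈ F, ∃ n : ℕ, n ≤ (p.1 - f.1).toNat ∧ dParent^[n] f = q := by
  simp [famA, Finset.mem_biUnion, Finset.mem_image, Finset.mem_range, Nat.lt_succ_iff]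

def famS (w : ℝ → ℝ) (p : ℤ×ℤ) (F : Finset (ℤ×ℤ)) : Finset (ℤ×ℤ) :=
  insert p ((famA p F).image (stopF w p))

section FamProps
variable {w : ℝ → ℝ} (hw : ∀ x, 0 < w x) (hwi : LocallyIntegrable w volume)
  {p : ℤ×ℤ} {F : Finset (ℤ×ℤ)} (hF : ∀ f ∈ F, dyad f ⊆ dyad p)

include hF in
lemma famA_sub {q : ℤ×ℤ} (hq : q ∈ famA p F) : dyad q ⊆ dyad p := by
  rw [mem_famA] at hq
  obtain ⟨f, hf, n, hn, rfl⟩ := hq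
  have hsc : f.1 ≤ p.1 := scale_le_of_subset (hF f hf)
  exact iterate_subset n f (hF f hf) (by omega)

include hF in
lemma famA_iter_mem {f : ℤ×ℤ} (hf : f ∈ F) (m : ℕ) (hm : f.1 + m ≤ p.1) :
    dParent^[m] f ∈ famA p F := by
  rw [mem_famA]
  have hsc : f.1 ≤ p.1 := scale_le_of_subset (hF f hf)
  exact ⟨f, hf, m, by omega, rfl⟩

include hw hwi hF in
lemma famS_sub : ∀ G ∈ famS w p F, dyad G ⊆ dyad p := by
  intro G hG
  rw [famS, Finset.mem_insert] at hG
  rcases hG with rfl | hG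
  · exact le_refl _
  · rw [Finset.mem_image] at hG
    obtain ⟨q, hq, rfl⟩ := hG
    exact (stopF_basic hw hwi p (famA_sub hF hq)).1.2

include hw hwi hF in
lemma famS_fix : ∀ G ∈ famS w p F, stopF w p G = G := by
  intro G hG
  rw [famS, Finset.mem_insert] at hG
  rcases hG with rfl | hG
  · exact stopF_top G
  · rw [Finset.mem_image] at hG
    obtain ⟨q, hq, rfl⟩ := hG
    exact (stopF_basic hw hwi p (famA_sub hF hq)).2.1

include hw hwi hF in
lemma famS_closed : ∀ G ∈ famS w p F, G ≠ p → stopF w p (dParent G) ∈ famS w p F := by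
  intro G hG hGp
  rw [famS, Finset.mem_insert] at hG
  rcases hG with rfl | hG
  · exact absurd rfl hGp
  · rw [Finset.mem_image] at hG
    obtain ⟨q, hq, rfl⟩ := hG
    set G := stopF w p q with hGdef
    have hqsub : dyad q ⊆ dyad p := famA_sub hF hq
    obtain ⟨m, hm⟩ := (stopF_basic hw hwi p hqsub).2.2.2
    rw [mem_famA] at hq
    obtain ⟨f, hf, n, hn, rfl⟩ := hq
    have hGsub : dyad G ⊆ dyad p := (stopF_basic hw hwi p hqsub).1.2
    have hGsc : G.1 < p.1 := scale_lt_of_ssubset hGsub hGp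
    have hGit : G = dParent^[m + n] f := by
      rw [hGdef, hm, ← Function.iterate_add_apply]
    have hparit : dParent G = dParent^[(m + n) + 1] f := by
      rw [hGit, Function.iterate_succ_apply']
    have hGsc2 : G.1 = f.1 + (m + n) := by rw [hGit]; exact iterate_scale _ f
    have hpar_mem : dParent G ∈ famA p F := by
      rw [hparit]
      exact famA_iter_mem hF hf _ (by omega)
    rw [famS, Finset.mem_insert]
    right
    rw [Finset.mem_image]
    exact ⟨dParent G, hpar_mem, rfl⟩

include hF in
lemma mem_famA_of_mem {q : ℤ×ℤ} (hq : q ∈ F) : q ∈ famA p F := by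
  rw [mem_famA]
  exact ⟨q, hq, 0, by omega, rfl⟩

end FamProps
end S12


open S12 in
open Classical in
/-- `Σ_{K⊆L} ⟨w^{-1/2},h_K⟩² ⟨w⟩_K² ≲ [w]²_{A₂} w(L)`. -/
theorem statement12 :
    ∃ C : ℝ, 0 < C ∧ ∀ (w : ℝ → ℝ), (∀ x, 0 < w x) →
      LocallyIntegrable w volume → LocallyIntegrable (fun x => (w x)⁻¹) volume →
      ∀ A : ℝ, (∀ p : ℤ × ℤ, avg w p * avg (fun x => (w x)⁻¹) p ≤ A) →
      ∀ p : ℤ × ℤ, ∀ F : Finset (ℤ × ℤ), (∀ q ∈ F, dyad q ⊆ dyad p) →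
        ∑ q ∈ F, (hc (fun x => (Real.sqrt (w x))⁻¹) q) ^ 2 * (avg w q) ^ 2 ≤
          C * A ^ 2 * ∫ x in dyad p, w x := by
  refine ⟨16, by norm_num, ?_⟩
  intro w hw hwi hsi A hA p F hF
  set f : ℝ → ℝ := fun x => (Real.sqrt (w x))⁻¹ with hfdef
  have hAone : 1 ≤ A := one_le_A hw hwi hsi hA p
  set S := famS w p F with hSdef
  have hSsub := famS_sub hw hwi hF
  have hSfix := famS_fix hw hwi hF
  have hSclosed := famS_closed hw hwi hF
  have hpS : p ∈ S := by rw [hSdef, famS]; exact Finset.mem_insert_self _ _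
  have hmaps : ∀ q ∈ F, stopF w p q ∈ S := by
    intro q hq
    rw [hSdef, famS, Finset.mem_insert]
    right
    rw [Finset.mem_image]
    exact ⟨q, mem_famA_of_mem hF hq, rfl⟩
  -- step 1 : freeze the averages at the stopping interval
  have step1 : ∑ q ∈ F, (hc f q)^2 * (avg w q)^2
      ≤ ∑ q ∈ F, (hc f q)^2 * (2 * avg w (stopF w p q))^2 := by
    apply Finset.sum_le_sum
    intro q hq
    have h1 := (stopF_basic hw hwi p (hF q hq)).2.2.1
    have h2 : 0 ≤ avg w q := (avg_pos hw hwi q).le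
    have h3 : (avg w q)^2 ≤ (2 * avg w (stopF w p q))^2 := by
      apply sq_le_sq' <;> nlinarith
    exact mul_le_mul_of_nonneg_left h3 (sq_nonneg _)
  -- step 2 : group by stopping interval
  have step2 : ∑ q ∈ F, (hc f q)^2 * (2 * avg w (stopF w p q))^2
      = ∑ G ∈ S, ∑ q ∈ F.filter (fun q => stopF w p q = G),
          (hc f q)^2 * (2 * avg w (stopF w p q))^2 :=
    (Finset.sum_fiberwise_of_maps_to hmaps _).symm
  -- step 3 : Bessel + A2 on each fiber
  have step3 : ∀ G ∈ S, ∑ q ∈ F.filter (fun q => stopF w p q = G),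
      (hc f q)^2 * (2 * avg w (stopF w p q))^2 ≤ 4 * A * ∫ x in dyad G, w x := by
    intro G hG
    have hfsq : (fun x => (f x)^2) = fun x => (w x)⁻¹ := funext (sqrtw_inv_sq hw)
    have hbes : ∑ q ∈ F.filter (fun q => stopF w p q = G), (hc f q)^2
        ≤ ∫ x in dyad G, (w x)⁻¹ := by
      have := bessel (G := G) (f := f) (aesm_sqrtw_inv hwi) (intOn_sqrt hw hwi hsi G)
        (by rw [hfsq]; exact intOn_dyad hsi G)
        (F.filter (fun q => stopF w p q = G)) ?_
      · rw [← hfsq]; exact this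
      · intro q hq
        rw [Finset.mem_filter] at hq
        have := (stopF_basic hw hwi p (hF q hq.1)).1.1
        rw [hq.2] at this
        exact this
    have heq : ∀ q ∈ F.filter (fun q => stopF w p q = G),
        (hc f q)^2 * (2 * avg w (stopF w p q))^2 = (4 * (avg w G)^2) * (hc f q)^2 := by
      intro q hq
      rw [Finset.mem_filter] at hq
      rw [hq.2]
      ring
    rw [Finset.sum_congr rfl heq, ← Finset.mul_sum]
    have h4 : (4 * (avg w G)^2) * ∑ q ∈ F.filter (fun q => stopF w p q = G), (hc f q)^2
        ≤ (4 * (avg w G)^2) * ∫ x in dyad G, (w x)⁻¹ :=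
      mul_le_mul_of_nonneg_left hbes (by positivity)
    have h5 := a2_key hw hwi hsi hA G
    nlinarith [h4, h5]
  -- step 4 : Carleson packing
  have step4 : ∑ G ∈ S, (∫ x in dyad G, w x) ≤ 4 * A * ∫ x in dyad p, w x := by
    have hfilter : S.filter (fun G => dyad G ⊆ dyad p) = S :=
      Finset.filter_true_of_mem hSsub
    have := carleson hw hwi hsi hA hSsub hSfix hSclosed
      (S.filter (fun G => dyad G ⊆ dyad p ∧ G ≠ p)).card p hpS rfl
    rw [hfilter] at this
    exact this
  -- put everything together
  have step5 : ∑ G ∈ S, ∑ q ∈ F.filter (fun q => stopF w p q = G),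
      (hc f q)^2 * (2 * avg w (stopF w p q))^2
      ≤ 4 * A * (4 * A * ∫ x in dyad p, w x) := by
    calc _ ≤ ∑ G ∈ S, 4 * A * ∫ x in dyad G, w x := Finset.sum_le_sum step3
    _ = 4 * A * ∑ G ∈ S, ∫ x in dyad G, w x := by rw [Finset.mul_sum]
    _ ≤ _ := mul_le_mul_of_nonneg_left step4 (by linarith)
  have hwp := wInt_pos hw hwi p
  calc ∑ q ∈ F, (hc f q)^2 * (avg w q)^2
      ≤ ∑ q ∈ F, (hc f q)^2 * (2 * avg w (stopF w p q))^2 := step1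
  _ = _ := step2
  _ ≤ 4 * A * (4 * A * ∫ x in dyad p, w x) := step5
  _ = 16 * A^2 * ∫ x in dyad p, w x := by ring
end
end
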